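/- arXiv:2010.12487 — 9 statements merged into one kernel-verified Lean document; each statement's English description precedes it below -/
import Mathlib

section
/- Let d ≥ 1, ν > 0 and 0 ≤ p ≤ d. Let S be the LIME random subset of {1,…,d} with associated z_j = 1{j ∉ S} and weight π = ψ_ν(|S|/d). Then E[π · z_1 z_2 ⋯ z_p] = (1/d) · Σ_{s=1}^{d} [Π_{k=0}^{p−1} (d−s−k)/(d−k)] · ψ_ν(s/d) (for p = 0 the product of z's is 1 and the inner product over k is empty, giving E[π] = (1/d)Σ_{s=1}^d ψ_ν(s/d)). -/
noncomputable section

/-- The LIME weight function ψ_ν(t) = exp(−(1−√(1−t))²/(2ν²)). -/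
def psi (ν t : ℝ) : ℝ := Real.exp (-(1 - Real.sqrt (1 - t)) ^ 2 / (2 * ν ^ 2))

/-- Expectation of `g S` where `S` is the LIME random subset of `{1,…,d}`:
first draw `s` uniformly in `{1,…,d}`, then `S` uniformly among subsets of cardinality `s`. -/
def limeExp (d : ℕ) (g : Finset (Fin d) → ℝ) : ℝ :=
  (1 / (d : ℝ)) * ∑ s ∈ Finset.Icc 1 d, ((d.choose s : ℝ))⁻¹ *
    ∑ S ∈ Finset.univ.filter (fun S : Finset (Fin d) => S.card = s), g S

/-- The coefficient α_p(d,ν). -/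
def alpha (d : ℕ) (ν : ℝ) (p : ℕ) : ℝ :=
  (1 / (d : ℝ)) * ∑ s ∈ Finset.Icc 1 d,
    (∏ k ∈ Finset.range p, (((d : ℝ) - (s : ℝ) - (k : ℝ)) / ((d : ℝ) - (k : ℝ)))) *
      psi ν ((s : ℝ) / (d : ℝ))

lemma key_choose (d p s : ℕ) (hp : p ≤ d) :
    (((d - p).choose s : ℝ)) * ∏ k ∈ Finset.range p, ((d : ℝ) - (k : ℝ)) =
    ((d.choose s : ℝ)) * ∏ k ∈ Finset.range p, ((d : ℝ) - (s : ℝ) - (k : ℝ)) := by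
  induction p with
  | zero => simp
  | succ p ih =>
    have hpd : p < d := hp
    have hstep : (((d - (p+1)).choose s : ℝ)) * ((d : ℝ) - (p : ℝ)) =
        (((d - p).choose s : ℝ)) * ((d : ℝ) - (s : ℝ) - (p : ℝ)) := by
      rcases le_or_gt s (d - p) with hs | hs
      · have hnat := Nat.choose_mul_succ_eq (d - p - 1) s
        have h1 : d - p - 1 + 1 = d - p := by omega
        rw [h1] at hnat
        have h2 : d - (p + 1) = d - p - 1 := by omega
        have h3 : ((d - p - s : ℕ) : ℝ) = (d : ℝ) - (s : ℝ) - (p : ℝ) := by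
          have : ((d - p - s : ℕ) : ℝ) = ((d : ℕ) : ℝ) - ((p : ℕ) : ℝ) - ((s : ℕ) : ℝ) := by
            push_cast [Nat.cast_sub hs, Nat.cast_sub hpd.le]; ring
          rw [this]; ring
        have h4 : ((d - p : ℕ) : ℝ) = (d : ℝ) - (p : ℝ) := by
          push_cast [Nat.cast_sub hpd.le]; ring
        have := congrArg (fun n : ℕ => (n : ℝ)) hnat
        push_cast at this
        rw [h2, h4.symm, ← h3]
        exact_mod_cast this
      · have hz1 : (d - (p+1)).choose s = 0 := Nat.choose_eq_zero_of_lt (by omega)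
        have hz2 : (d - p).choose s = 0 := Nat.choose_eq_zero_of_lt hs
        simp [hz1, hz2]
    rw [Finset.prod_range_succ, Finset.prod_range_succ, ← mul_assoc, ← mul_assoc]
    calc ((d - (p+1)).choose s : ℝ) * (∏ k ∈ Finset.range p, ((d:ℝ) - k)) * ((d:ℝ) - p)
        = (((d - (p+1)).choose s : ℝ) * ((d:ℝ) - p)) * (∏ k ∈ Finset.range p, ((d:ℝ) - k)) := by ring
      _ = (((d - p).choose s : ℝ) * ((d:ℝ) - s - p)) * (∏ k ∈ Finset.range p, ((d:ℝ) - k)) := by rw [hstep]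
      _ = (((d - p).choose s : ℝ) * (∏ k ∈ Finset.range p, ((d:ℝ) - k))) * ((d:ℝ) - s - p) := by ring
      _ = ((d.choose s : ℝ) * (∏ k ∈ Finset.range p, ((d:ℝ) - s - k))) * ((d:ℝ) - s - p) := by rw [ih (by omega)]
      _ = _ := by ring

/-- E[π · z_1 ⋯ z_p] = α_p(d,ν), where the product is over the
first `p` indices of `{1,…,d}`, `z_j = 1{j ∉ S}` and `π = ψ_ν(|S|/d)`. -/
theorem lime_alpha_formula (d : ℕ) (hd : 1 ≤ d) (ν : ℝ) (hν : 0 < ν)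
    (p : ℕ) (hp : p ≤ d) :
    limeExp d (fun S => psi ν ((S.card : ℝ) / (d : ℝ)) *
        ∏ j ∈ Finset.univ.filter (fun j : Fin d => (j : ℕ) < p),
          (if j ∉ S then (1 : ℝ) else 0))
      = alpha d ν p := by
  classical
  set P : Finset (Fin d) := Finset.univ.filter (fun j : Fin d => (j : ℕ) < p) with hP
  have hPcard : P.card = p := by
    have hPeq : P = (Finset.range p).attachFin (fun m hm => lt_of_lt_of_le (Finset.mem_range.1 hm) hp) := by
      ext j; simp [hP, Finset.mem_attachFin]
    rw [hPeq, Finset.card_attachFin, Finset.card_range]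
  unfold limeExp alpha
  congr 1
  apply Finset.sum_congr rfl
  intro s hs
  obtain ⟨hs1, hs2⟩ := Finset.mem_Icc.mp hs
  -- inner sum
  have hinner : ∑ S ∈ Finset.univ.filter (fun S : Finset (Fin d) => S.card = s),
      (psi ν ((S.card : ℝ) / (d : ℝ)) * ∏ j ∈ P, (if j ∉ S then (1 : ℝ) else 0))
      = ((d - p).choose s : ℝ) * psi ν ((s : ℝ) / (d : ℝ)) := by
    have h1 : ∀ S ∈ Finset.univ.filter (fun S : Finset (Fin d) => S.card = s),
        psi ν ((S.card : ℝ) / (d : ℝ)) * ∏ j ∈ P, (if j ∉ S then (1 : ℝ) else 0)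
        = psi ν ((s : ℝ) / (d : ℝ)) * (if ∀ j ∈ P, j ∉ S then (1:ℝ) else 0) := by
      intro S hS
      rw [Finset.mem_filter] at hS
      rw [hS.2, Finset.prod_boole]
      congr 1
      split_ifs with ha hb hb <;> first | rfl | (exact absurd ha hb) | (exact absurd hb ha)
    rw [Finset.sum_congr rfl h1, ← Finset.mul_sum, Finset.sum_boole, Finset.filter_filter]
    have h2 : Finset.univ.filter (fun S : Finset (Fin d) => S.card = s ∧ ∀ j ∈ P, j ∉ S)
        = Finset.powersetCard s Pᶜ := by
      ext S
      simp only [Finset.mem_filter, Finset.mem_univ, true_and, Finset.mem_powersetCard]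
      constructor
      · rintro ⟨hc, hdisj⟩
        refine ⟨fun x hx => Finset.mem_compl.2 (fun hxP => hdisj x hxP hx), hc⟩
      · rintro ⟨hsub, hc⟩
        exact ⟨hc, fun j hjP hjS => Finset.mem_compl.1 (hsub hjS) hjP⟩
    rw [h2, Finset.card_powersetCard]
    have h3 : Pᶜ.card = d - p := by
      rw [Finset.card_compl, hPcard, Fintype.card_fin]
    rw [h3]; ring
  rw [hinner]
  -- ratio identity
  have hchoose_pos : (0:ℝ) < (d.choose s : ℝ) := by
    exact_mod_cast Nat.choose_pos hs2
  have hprod_pos : (0:ℝ) < ∏ k ∈ Finset.range p, ((d : ℝ) - (k : ℝ)) := by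
    apply Finset.prod_pos
    intro k hk
    have : k < d := lt_of_lt_of_le (Finset.mem_range.1 hk) hp
    have : (k : ℝ) < (d : ℝ) := by exact_mod_cast this
    linarith
  have hkey := key_choose d p s hp
  have : (d.choose s : ℝ)⁻¹ * ((d - p).choose s : ℝ)
      = ∏ k ∈ Finset.range p, (((d : ℝ) - (s : ℝ) - (k : ℝ)) / ((d : ℝ) - (k : ℝ))) := by
    rw [Finset.prod_div_distrib]
    field_simp
    linarith [hkey]
  rw [← mul_assoc, this]
end
end

section
/- Let d ≥ 1, ν > 0 and 0 ≤ p ≤ d. Then ((d−p)/((p+1)d)) · exp(−1/(2ν²)) ≤ α_p(d,ν) ≤ (d−p)/((p+1)d). -/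
noncomputable section

lemma psi_le_one (ν t : ℝ) (hν : 0 < ν) : psi ν t ≤ 1 := by
  unfold psi
  rw [show (1:ℝ) = Real.exp 0 by simp]
  apply Real.exp_le_exp.2
  apply div_nonpos_of_nonpos_of_nonneg
  · nlinarith [sq_nonneg (1 - Real.sqrt (1 - t))]
  · positivity

lemma le_psi (ν t : ℝ) (hν : 0 < ν) (ht0 : 0 ≤ t) (ht1 : t ≤ 1) :
    Real.exp (-1 / (2 * ν ^ 2)) ≤ psi ν t := by
  unfold psi
  apply Real.exp_le_exp.2
  apply div_le_div_of_nonneg_right _ (by positivity)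
  have h1 : Real.sqrt (1 - t) ≤ 1 := by
    calc Real.sqrt (1 - t) ≤ Real.sqrt 1 := Real.sqrt_le_sqrt (by linarith)
      _ = 1 := Real.sqrt_one
  have h2 : 0 ≤ Real.sqrt (1 - t) := Real.sqrt_nonneg _
  nlinarith

lemma prod_num_eq (d p s : ℕ) (hs : s ≤ d) :
    ∏ k ∈ Finset.range p, ((d : ℝ) - (s : ℝ) - (k : ℝ)) = ((d - s).descFactorial p : ℝ) := by
  rcases le_or_gt p (d - s) with h | h
  · rw [Nat.descFactorial_eq_prod_range, Nat.cast_prod]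
    apply Finset.prod_congr rfl
    intro k hk
    rw [Finset.mem_range] at hk
    have hk' : k ≤ d - s := le_of_lt (lt_of_lt_of_le hk h)
    rw [Nat.cast_sub hk', Nat.cast_sub hs]
  · rw [Nat.descFactorial_eq_zero_iff_lt.2 h, Nat.cast_zero]
    apply Finset.prod_eq_zero (Finset.mem_range.2 (by omega : d - s < p))
    rw [Nat.cast_sub hs]
    ring

lemma coeff_eq (d p s : ℕ) (hs : s ≤ d) :
    ∏ k ∈ Finset.range p, (((d : ℝ) - (s : ℝ) - (k : ℝ)) / ((d : ℝ) - (k : ℝ)))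
      = ((d - s).descFactorial p : ℝ) / (d.descFactorial p : ℝ) := by
  rw [Finset.prod_div_distrib, prod_num_eq d p s hs]
  congr 1
  have := prod_num_eq d p 0 (Nat.zero_le d)
  simpa using this

lemma coeff_nonneg (d p s : ℕ) (hs : s ≤ d) :
    0 ≤ ∏ k ∈ Finset.range p, (((d : ℝ) - (s : ℝ) - (k : ℝ)) / ((d : ℝ) - (k : ℝ))) := by
  rw [coeff_eq d p s hs]
  positivity

lemma sum_coeff (d p : ℕ) (hd : 1 ≤ d) (hp : p ≤ d) :
    ∑ s ∈ Finset.Icc 1 d,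
      ∏ k ∈ Finset.range p, (((d : ℝ) - (s : ℝ) - (k : ℝ)) / ((d : ℝ) - (k : ℝ)))
      = ((d : ℝ) - (p : ℝ)) / ((p : ℝ) + 1) := by
  have hE : ∑ s ∈ Finset.Icc 1 d,
      (∏ k ∈ Finset.range p, (((d : ℝ) - (s : ℝ) - (k : ℝ)) / ((d : ℝ) - (k : ℝ))))
      = ∑ s ∈ Finset.Icc 1 d, ((d - s).descFactorial p : ℝ) / (d.descFactorial p : ℝ) := by
    refine Finset.sum_congr rfl fun s hs => ?_
    rw [Finset.mem_Icc] at hs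
    exact coeff_eq d p s hs.2
  rw [hE, ← Finset.sum_div]
  have hsum : ∑ s ∈ Finset.Icc 1 d, (d - s).descFactorial p
      = Nat.factorial p * Nat.choose d (p + 1) := by
    have h1 : ∑ s ∈ Finset.Icc 1 d, (d - s).descFactorial p
        = ∑ j ∈ Finset.range d, j.descFactorial p := by
      rw [← Finset.Ico_add_one_right_eq_Icc, Finset.sum_Ico_eq_sum_range]
      try simp only [Nat.add_sub_cancel]
      rw [← Finset.sum_range_reflect]
      refine Finset.sum_congr rfl fun i hi => ?_
      rw [Finset.mem_range] at hi
      congr 1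
      omega
    have h2 : ∑ j ∈ Finset.range d, j.descFactorial p
        = ∑ j ∈ Finset.range d, Nat.factorial p * Nat.choose j p :=
      Finset.sum_congr rfl fun j _ => Nat.descFactorial_eq_factorial_mul_choose j p
    have h3 : ∑ j ∈ Finset.range d, Nat.choose j p = Nat.choose d (p + 1) := by
      have hhs := Nat.sum_Icc_choose (d - 1) p
      rw [Nat.sub_add_cancel hd] at hhs
      rw [← hhs]
      refine (Finset.sum_subset ?_ ?_).symm
      · intro x hx
        rw [Finset.mem_Icc] at hx
        rw [Finset.mem_range]
        omega
      · intro x hx hx'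
        rw [Finset.mem_range] at hx
        rw [Finset.mem_Icc] at hx'
        exact Nat.choose_eq_zero_of_lt (by omega)
    rw [h1, h2, ← Finset.mul_sum, h3]
  have hsum' : ∑ s ∈ Finset.Icc 1 d, ((d - s).descFactorial p : ℝ)
      = (Nat.factorial p : ℝ) * (Nat.choose d (p + 1) : ℝ) := by
    rw [← Nat.cast_sum]
    exact_mod_cast congrArg (Nat.cast : ℕ → ℝ) hsum
  rw [hsum']
  have hdf : (Nat.descFactorial d p : ℝ) = (Nat.factorial p : ℝ) * (Nat.choose d p : ℝ) := by
    exact_mod_cast congrArg (Nat.cast : ℕ → ℝ) (Nat.descFactorial_eq_factorial_mul_choose d p)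
  have hid : (Nat.choose d (p + 1) : ℝ) * ((p : ℝ) + 1)
      = (Nat.choose d p : ℝ) * ((d : ℝ) - (p : ℝ)) := by
    have h := congrArg (Nat.cast : ℕ → ℝ) (Nat.choose_succ_right_eq d p)
    push_cast [Nat.cast_sub hp] at h
    linarith
  have hc : (0 : ℝ) < (Nat.choose d p : ℝ) := by exact_mod_cast Nat.choose_pos hp
  have hf : (0 : ℝ) < (Nat.factorial p : ℝ) := by exact_mod_cast Nat.factorial_pos p
  rw [hdf]
  rw [div_eq_div_iff (by positivity) (by positivity)]
  nlinarith [hid]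

/-- ((d−p)/((p+1)d)) · exp(−1/(2ν²)) ≤ α_p(d,ν) ≤ (d−p)/((p+1)d). -/
theorem alpha_bounds (d : ℕ) (hd : 1 ≤ d) (ν : ℝ) (hν : 0 < ν) (p : ℕ) (hp : p ≤ d) :
    (((d : ℝ) - (p : ℝ)) / (((p : ℝ) + 1) * (d : ℝ))) * Real.exp (-1 / (2 * ν ^ 2))
        ≤ alpha d ν p
      ∧ alpha d ν p ≤ ((d : ℝ) - (p : ℝ)) / (((p : ℝ) + 1) * (d : ℝ)) := by
  have hd0 : (0 : ℝ) < (d : ℝ) := by exact_mod_cast hd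
  have hD : (0 : ℝ) < 1 / (d : ℝ) := by positivity
  unfold alpha
  constructor
  · have h1 : ∑ s ∈ Finset.Icc 1 d,
        (∏ k ∈ Finset.range p, (((d : ℝ) - (s : ℝ) - (k : ℝ)) / ((d : ℝ) - (k : ℝ)))) *
          Real.exp (-1 / (2 * ν ^ 2))
        ≤ ∑ s ∈ Finset.Icc 1 d,
        (∏ k ∈ Finset.range p, (((d : ℝ) - (s : ℝ) - (k : ℝ)) / ((d : ℝ) - (k : ℝ)))) *
          psi ν ((s : ℝ) / (d : ℝ)) := by
      refine Finset.sum_le_sum fun s hs => ?_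
      rw [Finset.mem_Icc] at hs
      refine mul_le_mul_of_nonneg_left ?_ (coeff_nonneg d p s hs.2)
      refine le_psi ν _ hν (by positivity) ?_
      rw [div_le_one hd0]
      exact_mod_cast hs.2
    rw [← Finset.sum_mul, sum_coeff d p hd hp] at h1
    calc (((d : ℝ) - (p : ℝ)) / (((p : ℝ) + 1) * (d : ℝ))) * Real.exp (-1 / (2 * ν ^ 2))
        = (1 / (d : ℝ)) * ((((d : ℝ) - (p : ℝ)) / ((p : ℝ) + 1)) *
            Real.exp (-1 / (2 * ν ^ 2))) := by
          have hp1 : ((p : ℝ) + 1) ≠ 0 := by positivity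
          field_simp
      _ ≤ _ := by
          exact mul_le_mul_of_nonneg_left h1 hD.le
  · have h1 : ∑ s ∈ Finset.Icc 1 d,
        (∏ k ∈ Finset.range p, (((d : ℝ) - (s : ℝ) - (k : ℝ)) / ((d : ℝ) - (k : ℝ)))) *
          psi ν ((s : ℝ) / (d : ℝ))
        ≤ ∑ s ∈ Finset.Icc 1 d,
        (∏ k ∈ Finset.range p, (((d : ℝ) - (s : ℝ) - (k : ℝ)) / ((d : ℝ) - (k : ℝ)))) := by
      refine Finset.sum_le_sum fun s hs => ?_
      rw [Finset.mem_Icc] at hs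
      calc _ ≤ (∏ k ∈ Finset.range p,
            (((d : ℝ) - (s : ℝ) - (k : ℝ)) / ((d : ℝ) - (k : ℝ)))) * 1 :=
          mul_le_mul_of_nonneg_left (psi_le_one ν _ hν) (coeff_nonneg d p s hs.2)
        _ = _ := mul_one _
    rw [sum_coeff d p hd hp] at h1
    calc (1 / (d : ℝ)) * ∑ s ∈ Finset.Icc 1 d,
          (∏ k ∈ Finset.range p, (((d : ℝ) - (s : ℝ) - (k : ℝ)) / ((d : ℝ) - (k : ℝ)))) *
            psi ν ((s : ℝ) / (d : ℝ))
        ≤ (1 / (d : ℝ)) * ((((d : ℝ) - (p : ℝ)) / ((p : ℝ) + 1))) :=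
          mul_le_mul_of_nonneg_left h1 hD.le
      _ = ((d : ℝ) - (p : ℝ)) / (((p : ℝ) + 1) * (d : ℝ)) := by
          have hp1 : ((p : ℝ) + 1) ≠ 0 := by positivity
          field_simp
end
end

section
/- Let d ≥ 1 and ν > 0, and write α_0, α_1, α_2 for α_0(d,ν), α_1(d,ν), α_2(d,ν). Assume c_d ≠ 0 and α_1 ≠ α_2. Let Σ ∈ ℝ^{(d+1)×(d+1)} (rows and columns indexed by 0,…,d) be the matrix with Σ_{0,0} = α_0, Σ_{0,j} = Σ_{j,0} = Σ_{j,j} = α_1 for 1 ≤ j ≤ d, and Σ_{j,k} = α_2 for 1 ≤ j ≠ k ≤ d. Let M ∈ ℝ^{(d+1)×(d+1)} be the matrix with M_{0,0} = σ_0/c_d, M_{0,j} = M_{j,0} = σ_1/c_d for 1 ≤ j ≤ d, M_{j,j} = σ_2/c_d for 1 ≤ j ≤ d, and M_{j,k} = σ_3/c_d for 1 ≤ j ≠ k ≤ d. Then Σ · M = I_{d+1}, i.e. M is the inverse of Σ. -/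
noncomputable section

/-- The normalization constant c_d = (d−1)α₀α₂ − dα₁² + α₀α₁. -/
def cConst (d : ℕ) (ν : ℝ) : ℝ :=
  ((d : ℝ) - 1) * alpha d ν 0 * alpha d ν 2 - (d : ℝ) * (alpha d ν 1) ^ 2
    + alpha d ν 0 * alpha d ν 1

/-- σ₀ = (d−1)α₂ + α₁. -/
def sigma0 (d : ℕ) (ν : ℝ) : ℝ := ((d : ℝ) - 1) * alpha d ν 2 + alpha d ν 1

/-- σ₁ = −α₁. -/
def sigma1 (d : ℕ) (ν : ℝ) : ℝ := -(alpha d ν 1)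

/-- σ₂ = ((d−2)α₀α₂ − (d−1)α₁² + α₀α₁)/(α₁−α₂). -/
def sigma2 (d : ℕ) (ν : ℝ) : ℝ :=
  (((d : ℝ) - 2) * alpha d ν 0 * alpha d ν 2 - ((d : ℝ) - 1) * (alpha d ν 1) ^ 2
      + alpha d ν 0 * alpha d ν 1) / (alpha d ν 1 - alpha d ν 2)

/-- σ₃ = (α₁² − α₀α₂)/(α₁−α₂). -/
def sigma3 (d : ℕ) (ν : ℝ) : ℝ :=
  ((alpha d ν 1) ^ 2 - alpha d ν 0 * alpha d ν 2) / (alpha d ν 1 - alpha d ν 2)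

/-- The matrix Σ ∈ ℝ^{(d+1)×(d+1)}: Σ₀₀ = α₀; Σ₀ⱼ = Σⱼ₀ = Σⱼⱼ = α₁ for 1 ≤ j ≤ d;
Σⱼₖ = α₂ for 1 ≤ j ≠ k ≤ d. -/
def SigmaMat (d : ℕ) (ν : ℝ) : Matrix (Fin (d + 1)) (Fin (d + 1)) ℝ :=
  Matrix.of fun i j =>
    if i = 0 ∧ j = 0 then alpha d ν 0
    else if i = 0 ∨ j = 0 ∨ i = j then alpha d ν 1
    else alpha d ν 2

/-- The claimed inverse matrix M = (1/c_d)·(σ-pattern). -/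
def InvMat (d : ℕ) (ν : ℝ) : Matrix (Fin (d + 1)) (Fin (d + 1)) ℝ :=
  Matrix.of fun i j =>
    if i = 0 ∧ j = 0 then sigma0 d ν / cConst d ν
    else if i = 0 ∨ j = 0 then sigma1 d ν / cConst d ν
    else if i = j then sigma2 d ν / cConst d ν
    else sigma3 d ν / cConst d ν


lemma sum_ite1 (n : ℕ) (j : Fin n) (A B : ℝ) :
    ∑ k : Fin n, (if k = j then A else B) = A + ((n : ℝ) - 1) * B := by
  have h : ∀ k : Fin n, (if k = j then A else B)
      = B + (if k = j then A - B else 0) := by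
    intro k; split_ifs <;> ring
  rw [Finset.sum_congr rfl fun k _ => h k, Finset.sum_add_distrib,
    Finset.sum_const, Finset.sum_ite_eq' Finset.univ j]
  simp [Finset.card_univ]
  ring

lemma sum_ite1' (n : ℕ) (j : Fin n) (A B : ℝ) :
    ∑ k : Fin n, (if j = k then A else B) = A + ((n : ℝ) - 1) * B := by
  have h : ∀ k : Fin n, (if j = k then A else B) = (if k = j then A else B) := by
    intro k
    rcases eq_or_ne k j with h | h
    · subst h; simp
    · simp [h, Ne.symm h]
  rw [Finset.sum_congr rfl fun k _ => h k, sum_ite1]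

lemma sum_ite2 (n : ℕ) (i j : Fin n) (hij : i ≠ j) (A B C : ℝ) :
    ∑ k : Fin n, (if k = i then A else if k = j then B else C)
      = A + B + ((n : ℝ) - 2) * C := by
  have h : ∀ k : Fin n, (if k = i then A else if k = j then B else C)
      = C + (if k = i then A - C else 0) + (if k = j then B - C else 0) := by
    intro k
    by_cases h1 : k = i
    · subst h1; simp [hij]
    · by_cases h2 : k = j
      · subst h2; simp [h1, Ne.symm hij]
      · simp [h1, h2]
  rw [Finset.sum_congr rfl fun k _ => h k, Finset.sum_add_distrib, Finset.sum_add_distrib,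
    Finset.sum_const, Finset.sum_ite_eq' Finset.univ i, Finset.sum_ite_eq' Finset.univ j]
  simp [Finset.card_univ]
  ring

/-- if c_d ≠ 0 and α₁ ≠ α₂ then Σ · M = I, i.e. M is the inverse of Σ. -/
theorem SigmaMat_mul_InvMat (d : ℕ) (hd : 1 ≤ d) (ν : ℝ) (hν : 0 < ν)
    (hc : cConst d ν ≠ 0) (hα : alpha d ν 1 ≠ alpha d ν 2) :
    SigmaMat d ν * InvMat d ν = 1 := by

  have hd1 : alpha d ν 1 - alpha d ν 2 ≠ 0 := sub_ne_zero.mpr hα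
  have hne : ∀ k : Fin d, Fin.succ k ≠ (0 : Fin (d+1)) := fun k => Fin.succ_ne_zero k
  ext i j
  rw [Matrix.mul_apply]
  induction i using Fin.cases with
  | zero =>
    induction j using Fin.cases with
    | zero =>
      simp only [SigmaMat, InvMat, Matrix.of_apply, Fin.sum_univ_succ, Fin.succ_ne_zero,
        and_true, and_false, true_and, if_true, if_false, ite_true, ite_false, eq_self_iff_true,
        true_or, or_true, or_false, false_or, and_self, Matrix.one_apply_eq,
        Finset.sum_const, Finset.card_univ, Fintype.card_fin, nsmul_eq_mul]
      field_simp
      simp only [sigma0, sigma1, cConst]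
      ring
    | succ j' =>
      simp only [SigmaMat, InvMat, Matrix.of_apply, Fin.sum_univ_succ, Fin.succ_ne_zero,
        and_true, and_false, true_and, false_and, if_true, if_false, ite_true, ite_false,
        eq_self_iff_true, true_or, or_true, or_false, false_or, and_self, Fin.succ_inj,
        mul_ite]
      rw [sum_ite1]
      rw [Matrix.one_apply_ne (Ne.symm (Fin.succ_ne_zero j'))]
      field_simp
      simp only [sigma1, sigma2, sigma3, cConst]
      field_simp
      ring
  | succ i' =>
    induction j using Fin.cases with
    | zero =>
      simp only [SigmaMat, InvMat, Matrix.of_apply, Fin.sum_univ_succ, Fin.succ_ne_zero,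
        and_true, and_false, true_and, false_and, if_true, if_false, ite_true, ite_false,
        eq_self_iff_true, true_or, or_true, or_false, false_or, and_self, Fin.succ_inj,
        ite_mul]
      rw [sum_ite1']
      rw [Matrix.one_apply_ne (Fin.succ_ne_zero i')]
      field_simp
      simp only [sigma0, sigma1, cConst]
      ring
    | succ j' =>
      simp only [SigmaMat, InvMat, Matrix.of_apply, Fin.sum_univ_succ, Fin.succ_ne_zero,
        and_true, and_false, true_and, false_and, if_true, if_false, ite_true, ite_false,
        eq_self_iff_true, true_or, or_true, or_false, false_or, and_self, Fin.succ_inj]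
      by_cases hij : i' = j'
      · subst hij
        have h : ∀ x : Fin d,
            (if i' = x then alpha d ν 1 else alpha d ν 2) *
              (if x = i' then sigma2 d ν / cConst d ν else sigma3 d ν / cConst d ν)
            = (if x = i' then alpha d ν 1 * (sigma2 d ν / cConst d ν)
               else alpha d ν 2 * (sigma3 d ν / cConst d ν)) := by
          intro x
          rcases eq_or_ne x i' with h | h
          · subst h; simp
          · simp [h, Ne.symm h]
        rw [Finset.sum_congr rfl fun x _ => h x, sum_ite1, Matrix.one_apply_eq]
        field_simp
        simp only [sigma1, sigma2, sigma3, cConst]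
        field_simp
        ring
      · have h : ∀ x : Fin d,
            (if i' = x then alpha d ν 1 else alpha d ν 2) *
              (if x = j' then sigma2 d ν / cConst d ν else sigma3 d ν / cConst d ν)
            = (if x = i' then alpha d ν 1 * (sigma3 d ν / cConst d ν)
               else if x = j' then alpha d ν 2 * (sigma2 d ν / cConst d ν)
               else alpha d ν 2 * (sigma3 d ν / cConst d ν)) := by
          intro x
          rcases eq_or_ne x i' with h | h
          · subst h; simp [hij]
          · rcases eq_or_ne x j' with h2 | h2
            · subst h2; simp [h, Ne.symm h]
            · simp [h, h2, Ne.symm h]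
        rw [Finset.sum_congr rfl fun x _ => h x, sum_ite2 d i' j' hij,
          Matrix.one_apply_ne (fun hs => hij (Fin.succ_inj.mp hs))]
        field_simp
        simp only [sigma1, sigma2, sigma3, cConst]
        field_simp
        ring
end
end

section
/- Let d ≥ 2 and ν > 0, and write α_0, α_1, α_2 for α_0(d,ν), α_1(d,ν), α_2(d,ν). Then α_1 − α_2 ≥ exp(−1/(2ν²))/6 > 0, and c_d = (d−1)α_0α_2 − dα_1² + α_0α_1 ≥ exp(−2/ν²)/40 > 0. In particular Σ (the matrix with Σ_{0,0} = α_0, Σ_{0,j} = Σ_{j,0} = Σ_{j,j} = α_1, Σ_{j,k} = α_2 for 1 ≤ j ≠ k ≤ d) is invertible. -/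
noncomputable section

open Finset

lemma sum_Icc_id (d : ℕ) : ∑ s ∈ Finset.Icc 1 d, (s:ℝ) = d*(d+1)/2 := by
  induction d with
  | zero => simp
  | succ n ih =>
    rw [Finset.sum_Icc_succ_top (Nat.le_add_left 1 n), ih]; push_cast; ring

lemma sum_Icc_sq (d : ℕ) : ∑ s ∈ Finset.Icc 1 d, (s:ℝ)^2 = d*(d+1)*(2*d+1)/6 := by
  induction d with
  | zero => simp
  | succ n ih =>
    rw [Finset.sum_Icc_succ_top (Nat.le_add_left 1 n), ih]; push_cast; ring

lemma sum_sq_diff (d : ℕ) :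
    ∑ s ∈ Finset.Icc 1 d, ∑ t ∈ Finset.Icc 1 d, ((s:ℝ)-(t:ℝ))^2
      = (d:ℝ)^2*((d:ℝ)+1)*((d:ℝ)-1)/6 := by
  have hcard : (Finset.Icc 1 d).card = d := by simp
  have inner : ∀ s : ℕ, ∑ t ∈ Finset.Icc 1 d, ((s:ℝ)-(t:ℝ))^2
      = (d:ℝ)*(s:ℝ)^2 - 2*(s:ℝ)*((d:ℝ)*((d:ℝ)+1)/2) + (d:ℝ)*((d:ℝ)+1)*(2*(d:ℝ)+1)/6 := by
    intro s
    have expand : ∑ t ∈ Finset.Icc 1 d, ((s:ℝ)-(t:ℝ))^2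
        = ∑ t ∈ Finset.Icc 1 d, ((s:ℝ)^2 - 2*(s:ℝ)*(t:ℝ) + (t:ℝ)^2) :=
      Finset.sum_congr rfl fun t _ => by ring
    rw [expand, Finset.sum_add_distrib, Finset.sum_sub_distrib, Finset.sum_const,
        ← Finset.mul_sum, sum_Icc_id d, sum_Icc_sq d, hcard, nsmul_eq_mul]
  rw [Finset.sum_congr rfl fun s _ => inner s, Finset.sum_add_distrib,
      Finset.sum_sub_distrib, ← Finset.mul_sum, Finset.sum_const, hcard, nsmul_eq_mul,
      sum_Icc_sq d]
  have : ∑ s ∈ Finset.Icc 1 d, 2*(s:ℝ)*((d:ℝ)*((d:ℝ)+1)/2)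
      = (∑ s ∈ Finset.Icc 1 d, (s:ℝ)) * (2*((d:ℝ)*((d:ℝ)+1)/2)) := by
    rw [Finset.sum_mul]
    exact Finset.sum_congr rfl fun s _ => by ring
  rw [this, sum_Icc_id d]
  ring

lemma quad_identity (d : ℕ) (hd : 2 ≤ d) (f : ℕ → ℝ) :
    ((d:ℝ)-1) * ((1/(d:ℝ)) * ∑ s ∈ Finset.Icc 1 d, f s)
        * ((1/(d:ℝ)) * ∑ s ∈ Finset.Icc 1 d,
            ((((d:ℝ)-(s:ℝ))/(d:ℝ)) * (((d:ℝ)-(s:ℝ)-1)/((d:ℝ)-1))) * f s)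
      - (d:ℝ) * ((1/(d:ℝ)) * ∑ s ∈ Finset.Icc 1 d, (((d:ℝ)-(s:ℝ))/(d:ℝ)) * f s)^2
      + ((1/(d:ℝ)) * ∑ s ∈ Finset.Icc 1 d, f s)
        * ((1/(d:ℝ)) * ∑ s ∈ Finset.Icc 1 d, (((d:ℝ)-(s:ℝ))/(d:ℝ)) * f s)
    = (1/(2*(d:ℝ)^3)) * ∑ s ∈ Finset.Icc 1 d, ∑ t ∈ Finset.Icc 1 d,
        ((s:ℝ)-(t:ℝ))^2 * (f s * f t) := by
  have hd2 : (2:ℝ) ≤ (d:ℝ) := by exact_mod_cast hd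
  have hd0 : (d:ℝ) ≠ 0 := by linarith
  have hd1 : (d:ℝ) - 1 ≠ 0 := by linarith
  set T := Finset.Icc 1 d with hT
  set w1 : ℕ → ℝ := fun s => ((d:ℝ)-(s:ℝ))/(d:ℝ) with hw1
  set w2 : ℕ → ℝ := fun s => (((d:ℝ)-(s:ℝ))/(d:ℝ)) * (((d:ℝ)-(s:ℝ)-1)/((d:ℝ)-1)) with hw2
  set K : ℕ → ℕ → ℝ := fun s t =>
    ((d:ℝ)-1) * (f s * (w2 t * f t)) - (d:ℝ) * ((w1 s * f s) * (w1 t * f t))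
      + f s * (w1 t * f t) with hK
  have e1 : ((d:ℝ)-1) * ((∑ s ∈ T, f s) * (∑ t ∈ T, w2 t * f t))
        - (d:ℝ) * ((∑ s ∈ T, w1 s * f s) * (∑ t ∈ T, w1 t * f t))
        + (∑ s ∈ T, f s) * (∑ t ∈ T, w1 t * f t)
      = ∑ s ∈ T, ∑ t ∈ T, K s t := by
    have i1 : ∀ s : ℕ, ∑ t ∈ T, K s t
        = ((d:ℝ)-1) * (f s * (∑ t ∈ T, w2 t * f t))
          - (d:ℝ) * ((w1 s * f s) * (∑ t ∈ T, w1 t * f t))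
          + f s * (∑ t ∈ T, w1 t * f t) := by
      intro s
      simp only [hK]
      rw [Finset.sum_add_distrib, Finset.sum_sub_distrib]
      simp only [← Finset.mul_sum]
    rw [Finset.sum_congr rfl fun s _ => i1 s]
    apply Eq.symm
    rw [Finset.sum_add_distrib, Finset.sum_sub_distrib]
    simp only [← Finset.mul_sum, ← Finset.sum_mul]
  have hswap : ∑ s ∈ T, ∑ t ∈ T, K t s = ∑ s ∈ T, ∑ t ∈ T, K s t := Finset.sum_comm
  have hptwise : ∀ s t : ℕ, K s t + K t s = ((s:ℝ)-(t:ℝ))^2/(d:ℝ) * (f s * f t) := by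
    intro s t
    simp only [hK, hw1, hw2]
    field_simp
    ring
  have e2 : 2 * (∑ s ∈ T, ∑ t ∈ T, K s t)
      = ∑ s ∈ T, ∑ t ∈ T, ((s:ℝ)-(t:ℝ))^2/(d:ℝ) * (f s * f t) := by
    have h1 : ∑ s ∈ T, ∑ t ∈ T, ((s:ℝ)-(t:ℝ))^2/(d:ℝ) * (f s * f t)
        = ∑ s ∈ T, ∑ t ∈ T, (K s t + K t s) := by
      refine Finset.sum_congr rfl fun s _ => Finset.sum_congr rfl fun t _ => ?_
      rw [hptwise s t]
    have h2 : ∀ s : ℕ, ∑ t ∈ T, (K s t + K t s)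
        = (∑ t ∈ T, K s t) + (∑ t ∈ T, K t s) := fun s => Finset.sum_add_distrib
    rw [h1, Finset.sum_congr rfl fun s _ => h2 s, Finset.sum_add_distrib, hswap]
    ring
  have e3 : ∑ s ∈ T, ∑ t ∈ T, ((s:ℝ)-(t:ℝ))^2 * (f s * f t)
      = (d:ℝ) * ∑ s ∈ T, ∑ t ∈ T, ((s:ℝ)-(t:ℝ))^2/(d:ℝ) * (f s * f t) := by
    simp only [Finset.mul_sum]
    refine Finset.sum_congr rfl fun s _ => Finset.sum_congr rfl fun t _ => ?_
    field_simp
  have hA : ((d:ℝ)-1) * ((1/(d:ℝ)) * ∑ s ∈ T, f s)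
        * ((1/(d:ℝ)) * ∑ s ∈ T, w2 s * f s)
      - (d:ℝ) * ((1/(d:ℝ)) * ∑ s ∈ T, w1 s * f s)^2
      + ((1/(d:ℝ)) * ∑ s ∈ T, f s) * ((1/(d:ℝ)) * ∑ s ∈ T, w1 s * f s)
      = (1/(d:ℝ)^2) * (((d:ℝ)-1) * ((∑ s ∈ T, f s) * (∑ t ∈ T, w2 t * f t))
        - (d:ℝ) * ((∑ s ∈ T, w1 s * f s) * (∑ t ∈ T, w1 t * f t))
        + (∑ s ∈ T, f s) * (∑ t ∈ T, w1 t * f t)) := by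
    ring
  rw [hA, e1, e3, ← e2]
  field_simp

lemma alpha0_eq (d : ℕ) (ν : ℝ) :
    alpha d ν 0 = (1/(d:ℝ)) * ∑ s ∈ Finset.Icc 1 d, psi ν ((s:ℝ)/(d:ℝ)) := by
  simp [alpha]

lemma alpha1_eq (d : ℕ) (ν : ℝ) :
    alpha d ν 1 = (1/(d:ℝ)) * ∑ s ∈ Finset.Icc 1 d,
      (((d:ℝ)-(s:ℝ))/(d:ℝ)) * psi ν ((s:ℝ)/(d:ℝ)) := by
  simp [alpha, Finset.prod_range_one]

lemma alpha2_eq (d : ℕ) (ν : ℝ) :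
    alpha d ν 2 = (1/(d:ℝ)) * ∑ s ∈ Finset.Icc 1 d,
      ((((d:ℝ)-(s:ℝ))/(d:ℝ)) * (((d:ℝ)-(s:ℝ)-1)/((d:ℝ)-1))) * psi ν ((s:ℝ)/(d:ℝ)) := by
  unfold alpha
  congr 1
  apply Finset.sum_congr rfl
  intro s _
  rw [Finset.prod_range_succ, Finset.prod_range_one]
  push_cast
  ring_nf

lemma psi_ge (ν : ℝ) (hν : 0 < ν) {t : ℝ} (h0 : 0 ≤ t) (h1 : t ≤ 1) :
    Real.exp (-1/(2*ν^2)) ≤ psi ν t := by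
  unfold psi
  apply Real.exp_le_exp.mpr
  have hs0 : 0 ≤ Real.sqrt (1-t) := Real.sqrt_nonneg _
  have hs1 : Real.sqrt (1-t) ≤ 1 := Real.sqrt_le_one.mpr (by linarith)
  have hsq : (1 - Real.sqrt (1-t))^2 ≤ 1 := by nlinarith
  have h2 : (0:ℝ) < 2*ν^2 := by positivity
  rw [neg_div, neg_div, neg_le_neg_iff]
  gcongr

lemma gap_ge (d : ℕ) (hd : 2 ≤ d) (ν : ℝ) (hν : 0 < ν) :
    alpha d ν 1 - alpha d ν 2 ≥ Real.exp (-1/(2*ν^2)) / 6 := by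
  have hd0 : (0:ℝ) < (d:ℝ) := by exact_mod_cast Nat.pos_of_ne_zero (by omega)
  have hd1 : (0:ℝ) < (d:ℝ) - 1 := by
    have : (2:ℝ) ≤ (d:ℝ) := by exact_mod_cast hd
    linarith
  set E := Real.exp (-1/(2*ν^2)) with hE
  have hEpos : 0 < E := Real.exp_pos _
  have h1 : alpha d ν 1 - alpha d ν 2
      = (1/(d:ℝ)) * ∑ s ∈ Finset.Icc 1 d,
          ((s:ℝ)*((d:ℝ)-(s:ℝ))/((d:ℝ)*((d:ℝ)-1))) * psi ν ((s:ℝ)/(d:ℝ)) := by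
    rw [alpha1_eq, alpha2_eq, ← mul_sub, ← Finset.sum_sub_distrib]
    congr 1
    apply Finset.sum_congr rfl
    intro s _
    rw [← sub_mul]
    congr 1
    field_simp
    ring
  have hcoef : ∀ s ∈ Finset.Icc 1 d, (0:ℝ) ≤ (s:ℝ)*((d:ℝ)-(s:ℝ))/((d:ℝ)*((d:ℝ)-1)) := by
    intro s hs
    simp only [Finset.mem_Icc] at hs
    have h1' : (1:ℝ) ≤ (s:ℝ) := by exact_mod_cast hs.1
    have h2' : (s:ℝ) ≤ (d:ℝ) := by exact_mod_cast hs.2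
    apply div_nonneg (by nlinarith) (by nlinarith)
  have h2 : ∑ s ∈ Finset.Icc 1 d, ((s:ℝ)*((d:ℝ)-(s:ℝ))/((d:ℝ)*((d:ℝ)-1))) * E
      ≤ ∑ s ∈ Finset.Icc 1 d, ((s:ℝ)*((d:ℝ)-(s:ℝ))/((d:ℝ)*((d:ℝ)-1))) * psi ν ((s:ℝ)/(d:ℝ)) := by
    apply Finset.sum_le_sum
    intro s hs
    simp only [Finset.mem_Icc] at hs
    have h2' : (s:ℝ) ≤ (d:ℝ) := by exact_mod_cast hs.2
    have hpsi : E ≤ psi ν ((s:ℝ)/(d:ℝ)) :=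
      psi_ge ν hν (by positivity) (by rw [div_le_one hd0]; exact h2')
    exact mul_le_mul_of_nonneg_left hpsi (hcoef s (by simp [Finset.mem_Icc]; omega))
  have hsum : ∑ s ∈ Finset.Icc 1 d, (s:ℝ)*((d:ℝ)-(s:ℝ)) = (d:ℝ)*((d:ℝ)+1)*((d:ℝ)-1)/6 := by
    have e1 := sum_Icc_id d
    have e2 := sum_Icc_sq d
    have : ∑ s ∈ Finset.Icc 1 d, (s:ℝ)*((d:ℝ)-(s:ℝ))
        = (d:ℝ) * (∑ s ∈ Finset.Icc 1 d, (s:ℝ)) - ∑ s ∈ Finset.Icc 1 d, (s:ℝ)^2 := by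
      rw [Finset.mul_sum, ← Finset.sum_sub_distrib]
      apply Finset.sum_congr rfl; intro s _; ring
    rw [this, e1, e2]; ring
  have h3 : ∑ s ∈ Finset.Icc 1 d, ((s:ℝ)*((d:ℝ)-(s:ℝ))/((d:ℝ)*((d:ℝ)-1))) * E
      = ((d:ℝ)+1)/6 * E := by
    rw [← Finset.sum_mul]
    congr 1
    rw [← Finset.sum_div, hsum]
    field_simp
  rw [h1]
  have : ((d:ℝ)+1)/6 * E ≤ ∑ s ∈ Finset.Icc 1 d,
      ((s:ℝ)*((d:ℝ)-(s:ℝ))/((d:ℝ)*((d:ℝ)-1))) * psi ν ((s:ℝ)/(d:ℝ)) := h3 ▸ h2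
  have hfin : E/6 ≤ (1/(d:ℝ)) * (((d:ℝ)+1)/6 * E) := by
    have hkey : (1/(d:ℝ)) * (((d:ℝ)+1)/6 * E) - E/6 = E * (1/(6*(d:ℝ))) := by
      field_simp; ring
    nlinarith [mul_pos hEpos (by positivity : (0:ℝ) < 1/(6*(d:ℝ)))]
  calc E/6 ≤ (1/(d:ℝ)) * (((d:ℝ)+1)/6 * E) := hfin
    _ ≤ _ := by
      apply mul_le_mul_of_nonneg_left this (by positivity)

lemma cConst_ge (d : ℕ) (hd : 2 ≤ d) (ν : ℝ) (hν : 0 < ν) :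
    cConst d ν ≥ Real.exp (-2/ν^2) / 40 := by
  have hd2 : (2:ℝ) ≤ (d:ℝ) := by exact_mod_cast hd
  have hd0 : (0:ℝ) < (d:ℝ) := by linarith
  set E := Real.exp (-1/(2*ν^2)) with hE
  have hEpos : 0 < E := Real.exp_pos _
  set X := Real.exp (-2/ν^2) with hX
  have hXpos : 0 < X := Real.exp_pos _
  have hν2 : (0:ℝ) < ν^2 := by positivity
  have hXE : X ≤ E*E := by
    rw [hE, hX, ← Real.exp_add]
    apply Real.exp_le_exp.mpr
    have h1 : -1/(2*ν^2) + -1/(2*ν^2) = -1/ν^2 := by field_simp; ring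
    rw [h1]
    rw [div_le_div_iff₀ hν2 hν2]
    nlinarith
  have key := quad_identity d hd (fun s => psi ν ((s:ℝ)/(d:ℝ)))
  have hcc : cConst d ν = (1/(2*(d:ℝ)^3)) * ∑ s ∈ Finset.Icc 1 d, ∑ t ∈ Finset.Icc 1 d,
      ((s:ℝ)-(t:ℝ))^2 * (psi ν ((s:ℝ)/(d:ℝ)) * psi ν ((t:ℝ)/(d:ℝ))) := by
    rw [cConst, alpha0_eq, alpha1_eq, alpha2_eq, ← key]
  have hbound : ∑ s ∈ Finset.Icc 1 d, ∑ t ∈ Finset.Icc 1 d, ((s:ℝ)-(t:ℝ))^2 * (E*E)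
      ≤ ∑ s ∈ Finset.Icc 1 d, ∑ t ∈ Finset.Icc 1 d,
        ((s:ℝ)-(t:ℝ))^2 * (psi ν ((s:ℝ)/(d:ℝ)) * psi ν ((t:ℝ)/(d:ℝ))) := by
    apply Finset.sum_le_sum
    intro s hs
    apply Finset.sum_le_sum
    intro t ht
    simp only [Finset.mem_Icc] at hs ht
    have hsd : (s:ℝ) ≤ (d:ℝ) := by exact_mod_cast hs.2
    have htd : (t:ℝ) ≤ (d:ℝ) := by exact_mod_cast ht.2
    have hfs : E ≤ psi ν ((s:ℝ)/(d:ℝ)) :=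
      psi_ge ν hν (by positivity) (by rw [div_le_one hd0]; exact hsd)
    have hft : E ≤ psi ν ((t:ℝ)/(d:ℝ)) :=
      psi_ge ν hν (by positivity) (by rw [div_le_one hd0]; exact htd)
    have : E*E ≤ psi ν ((s:ℝ)/(d:ℝ)) * psi ν ((t:ℝ)/(d:ℝ)) :=
      mul_le_mul hfs hft hEpos.le (le_trans hEpos.le hfs)
    exact mul_le_mul_of_nonneg_left this (by positivity)
  have hval : ∑ s ∈ Finset.Icc 1 d, ∑ t ∈ Finset.Icc 1 d, ((s:ℝ)-(t:ℝ))^2 * (E*E)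
      = (E*E) * ((d:ℝ)^2*((d:ℝ)+1)*((d:ℝ)-1)/6) := by
    simp only [← Finset.sum_mul]
    rw [sum_sq_diff d]
    ring
  have hfrac : (1:ℝ)/40 ≤ (((d:ℝ)+1)*((d:ℝ)-1))/(12*(d:ℝ)) := by
    rw [div_le_div_iff₀ (by norm_num) (by positivity)]
    nlinarith
  rw [ge_iff_le, hcc]
  calc X/40 = X * (1/40) := by ring
    _ ≤ X * ((((d:ℝ)+1)*((d:ℝ)-1))/(12*(d:ℝ))) :=
        mul_le_mul_of_nonneg_left hfrac hXpos.le
    _ ≤ (E*E) * ((((d:ℝ)+1)*((d:ℝ)-1))/(12*(d:ℝ))) := by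
        apply mul_le_mul_of_nonneg_right hXE
        exact div_nonneg (by nlinarith) (by positivity)
    _ = (1/(2*(d:ℝ)^3)) * ((E*E) * ((d:ℝ)^2*((d:ℝ)+1)*((d:ℝ)-1)/6)) := by
        field_simp
        ring
    _ = (1/(2*(d:ℝ)^3)) * ∑ s ∈ Finset.Icc 1 d, ∑ t ∈ Finset.Icc 1 d,
          ((s:ℝ)-(t:ℝ))^2 * (E*E) := by rw [hval]
    _ ≤ _ := mul_le_mul_of_nonneg_left hbound (by positivity)

def dlt {n : ℕ} (i j : Fin n) : ℝ := if i = j then 1 else 0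

lemma dlt_self {n : ℕ} (a : Fin n) : dlt a a = 1 := by simp [dlt]

lemma sum_dlt_fst {n : ℕ} (a : Fin n) : ∑ k : Fin n, dlt a k = 1 := by simp [dlt]

lemma sum_dlt_snd {n : ℕ} (a : Fin n) : ∑ k : Fin n, dlt k a = 1 := by simp [dlt]

lemma sum_dlt_mid {n : ℕ} (a b : Fin n) : ∑ k : Fin n, dlt a k * dlt k b = dlt a b := by
  rw [Finset.sum_eq_single a]
  · simp [dlt]
  · intro k _ hk
    simp [dlt, Ne.symm hk]
  · simp

lemma sum_dlt_left2 {n : ℕ} (a b : Fin n) : ∑ k : Fin n, dlt k a * dlt k b = dlt a b := by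
  rw [Finset.sum_eq_single a]
  · simp [dlt]
  · intro k _ hk
    simp [dlt, hk]
  · simp

lemma dlt_comm {n : ℕ} (a b : Fin n) : dlt a b = dlt b a := by
  simp [dlt, eq_comm]

lemma Sigma_decomp (d : ℕ) (ν : ℝ) (i k : Fin (d+1)) :
    SigmaMat d ν i k
      = alpha d ν 2
        + (alpha d ν 1 - alpha d ν 2) * (dlt i k + dlt i 0 + dlt k 0)
        + (alpha d ν 0 - 3*alpha d ν 1 + 2*alpha d ν 2) * (dlt i 0 * dlt k 0) := by
  unfold SigmaMat dlt
  rcases eq_or_ne i 0 with hi | hi <;> rcases eq_or_ne k 0 with hk | hk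
  · subst hi; subst hk; simp; try ring
  · subst hi
    simp [hk, Ne.symm hk]
    try ring
  · subst hk
    simp [hi, Ne.symm hi]
    try ring
  · rcases eq_or_ne i k with hik | hik
    · subst hik; simp [hi, hk]; try ring
    · simp [hi, hk, hik]
      try ring

def Minv (d : ℕ) (ν : ℝ) : Matrix (Fin (d+1)) (Fin (d+1)) ℝ :=
  Matrix.of fun k j =>
    sigma3 d ν / cConst d ν
    + ((sigma2 d ν - sigma3 d ν)/cConst d ν) * dlt k j
    + ((sigma1 d ν - sigma3 d ν)/cConst d ν) * (dlt k 0 + dlt j 0)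
    + ((sigma0 d ν - sigma2 d ν - 2*sigma1 d ν + 2*sigma3 d ν)/cConst d ν) * (dlt k 0 * dlt j 0)

set_option maxHeartbeats 2000000 in
lemma Sigma_mul_Minv (d : ℕ) (ν : ℝ)
    (hgap : alpha d ν 1 - alpha d ν 2 ≠ 0) (hc : cConst d ν ≠ 0) :
    SigmaMat d ν * Minv d ν = 1 := by
  have hc2 : ((d:ℝ) - 1) * alpha d ν 0 * alpha d ν 2 - (d:ℝ) * (alpha d ν 1) ^ 2
      + alpha d ν 0 * alpha d ν 1 ≠ 0 := hc
  ext i j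
  rw [Matrix.mul_apply, Matrix.one_apply]
  have hterm : ∀ k : Fin (d+1), SigmaMat d ν i k * Minv d ν k j
      = (alpha d ν 2 + (alpha d ν 1 - alpha d ν 2)*dlt i 0) * ((sigma3 d ν / cConst d ν) + ((sigma1 d ν - sigma3 d ν)/cConst d ν)*dlt j 0)
        + ((alpha d ν 1 - alpha d ν 2) * ((sigma3 d ν / cConst d ν) + ((sigma1 d ν - sigma3 d ν)/cConst d ν)*dlt j 0)) * dlt i k
        + ((alpha d ν 2 + (alpha d ν 1 - alpha d ν 2)*dlt i 0) * ((sigma2 d ν - sigma3 d ν)/cConst d ν)) * dlt k j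
        + ((alpha d ν 2 + (alpha d ν 1 - alpha d ν 2)*dlt i 0) * (((sigma1 d ν - sigma3 d ν)/cConst d ν) + ((sigma0 d ν - sigma2 d ν - 2*sigma1 d ν + 2*sigma3 d ν)/cConst d ν)*dlt j 0) + ((alpha d ν 1 - alpha d ν 2) + (alpha d ν 0 - 3*alpha d ν 1 + 2*alpha d ν 2)*dlt i 0) * ((sigma3 d ν / cConst d ν) + ((sigma1 d ν - sigma3 d ν)/cConst d ν)*dlt j 0)) * dlt k 0
        + ((alpha d ν 1 - alpha d ν 2) * ((sigma2 d ν - sigma3 d ν)/cConst d ν)) * (dlt i k * dlt k j)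
        + ((alpha d ν 1 - alpha d ν 2) * (((sigma1 d ν - sigma3 d ν)/cConst d ν) + ((sigma0 d ν - sigma2 d ν - 2*sigma1 d ν + 2*sigma3 d ν)/cConst d ν)*dlt j 0)) * (dlt i k * dlt k 0)
        + (((alpha d ν 1 - alpha d ν 2) + (alpha d ν 0 - 3*alpha d ν 1 + 2*alpha d ν 2)*dlt i 0) * ((sigma2 d ν - sigma3 d ν)/cConst d ν)) * (dlt k 0 * dlt k j)
        + (((alpha d ν 1 - alpha d ν 2) + (alpha d ν 0 - 3*alpha d ν 1 + 2*alpha d ν 2)*dlt i 0) * (((sigma1 d ν - sigma3 d ν)/cConst d ν) + ((sigma0 d ν - sigma2 d ν - 2*sigma1 d ν + 2*sigma3 d ν)/cConst d ν)*dlt j 0)) * (dlt k 0 * dlt k 0) := by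
    intro k
    rw [Sigma_decomp]
    simp only [Minv, Matrix.of_apply]
    ring
  rw [Finset.sum_congr rfl fun k _ => hterm k]
  simp only [Finset.sum_add_distrib]
  simp only [← Finset.mul_sum]
  simp only [sum_dlt_fst, sum_dlt_snd, sum_dlt_mid, sum_dlt_left2, dlt_self,
    Finset.sum_const, Finset.card_univ, Fintype.card_fin, nsmul_eq_mul, mul_one]
  push_cast
  rcases eq_or_ne i 0 with hi | hi <;> rcases eq_or_ne j 0 with hj | hj
  · subst hi; subst hj
    simp only [dlt_self, if_pos rfl]
    simp only [sigma0, sigma1, sigma2, sigma3, cConst]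
    simp only [eq_self_iff_true, ↓reduceIte]
    set C := ((d:ℝ) - 1) * alpha d ν 0 * alpha d ν 2 - (d:ℝ) * (alpha d ν 1) ^ 2 + alpha d ν 0 * alpha d ν 1 with hC
    field_simp [hgap, hc2]
    rw [hC]
    ring
  · subst hi
    have h0j : ¬((0 : Fin (d+1)) = j) := fun h => hj h.symm
    simp only [dlt, if_pos rfl, if_neg h0j, if_neg hj]
    simp only [sigma0, sigma1, sigma2, sigma3, cConst]
    field_simp [hgap, hc2]
    ring
  · subst hj
    simp only [dlt, if_pos rfl, if_neg hi]
    simp only [sigma0, sigma1, sigma2, sigma3, cConst]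
    field_simp [hgap, hc2]
    ring
  · rcases eq_or_ne i j with hij | hij
    · subst hij
      have h0i : ¬((0 : Fin (d+1)) = i) := fun h => hi h.symm
      simp only [dlt, if_pos rfl, if_neg hi, if_neg h0i]
      simp only [sigma0, sigma1, sigma2, sigma3, cConst]
      simp only [eq_self_iff_true, ↓reduceIte]
      set C := ((d:ℝ) - 1) * alpha d ν 0 * alpha d ν 2 - (d:ℝ) * (alpha d ν 1) ^ 2 + alpha d ν 0 * alpha d ν 1 with hC
      field_simp [hgap, hc2]
      rw [hC]
      ring
    · have h0j : ¬((0 : Fin (d+1)) = j) := fun h => hj h.symm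
      simp only [dlt, if_neg hij, if_neg hi, if_neg hj, if_neg h0j]
      simp only [sigma0, sigma1, sigma2, sigma3, cConst]
      field_simp [hgap, hc2]
      ring

/-- for d ≥ 2, α₁ − α₂ ≥ exp(−1/(2ν²))/6 > 0 and
c_d ≥ exp(−2/ν²)/40 > 0; in particular Σ is invertible. -/
theorem alpha_gap_and_cConst_pos (d : ℕ) (hd : 2 ≤ d) (ν : ℝ) (hν : 0 < ν) :
    (alpha d ν 1 - alpha d ν 2 ≥ Real.exp (-1 / (2 * ν ^ 2)) / 6)
      ∧ (0 : ℝ) < Real.exp (-1 / (2 * ν ^ 2)) / 6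
      ∧ (cConst d ν ≥ Real.exp (-2 / ν ^ 2) / 40)
      ∧ (0 : ℝ) < Real.exp (-2 / ν ^ 2) / 40
      ∧ IsUnit (SigmaMat d ν) := by
  have h1 : alpha d ν 1 - alpha d ν 2 ≥ Real.exp (-1 / (2 * ν ^ 2)) / 6 := gap_ge d hd ν hν
  have h2 : (0 : ℝ) < Real.exp (-1 / (2 * ν ^ 2)) / 6 := by positivity
  have h3 : cConst d ν ≥ Real.exp (-2 / ν ^ 2) / 40 := cConst_ge d hd ν hν
  have h4 : (0 : ℝ) < Real.exp (-2 / ν ^ 2) / 40 := by positivity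
  have hgap : alpha d ν 1 - alpha d ν 2 ≠ 0 := by
    have := lt_of_lt_of_le h2 h1
    linarith
  have hc : cConst d ν ≠ 0 := by
    have := lt_of_lt_of_le h4 h3
    linarith
  have hSM : SigmaMat d ν * Minv d ν = 1 := Sigma_mul_Minv d ν hgap hc
  exact ⟨h1, h2, h3, h4, ⟨⟨SigmaMat d ν, Minv d ν, hSM, mul_eq_one_comm.mp hSM⟩, rfl⟩⟩

end
end

section
/- Let d ≥ 2. As ν → +∞: c_d(d,ν) converges to (d²−1)/(12d); σ_0/c_d converges to 2(2d−1)/(d+1); σ_1/c_d converges to −6/(d+1); σ_2/c_d converges to 6(d²−2d+3)/((d+1)(d−1)); and σ_3/c_d converges to −6(d−3)/((d+1)(d−1)). -/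
noncomputable section

open Filter Finset

lemma psi_tendsto (t : ℝ) : Tendsto (fun ν : ℝ => psi ν t) atTop (nhds 1) := by
  have h2 : Tendsto (fun ν : ℝ => 2 * ν ^ 2) atTop atTop :=
    (tendsto_pow_atTop (by norm_num)).const_mul_atTop (by norm_num)
  have h0 : Tendsto (fun ν : ℝ => -(1 - Real.sqrt (1 - t)) ^ 2 / (2 * ν ^ 2)) atTop (nhds 0) :=
    Tendsto.div_atTop tendsto_const_nhds h2
  have := (Real.continuous_exp.tendsto 0).comp h0
  simpa [psi, Real.exp_zero, Function.comp_def] using this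

lemma sum_m (n : ℕ) : ∑ m ∈ Finset.range n, (m : ℝ) = n * (n - 1) / 2 := by
  induction n with
  | zero => simp
  | succ k ih => rw [Finset.sum_range_succ, ih]; push_cast; ring

lemma sum_mm (n : ℕ) :
    ∑ m ∈ Finset.range n, (m : ℝ) * ((m : ℝ) - 1) = n * (n - 1) * (n - 2) / 3 := by
  induction n with
  | zero => simp
  | succ k ih => rw [Finset.sum_range_succ, ih]; push_cast; ring

lemma reindex (d : ℕ) (f : ℝ → ℝ) :
    ∑ s ∈ Finset.Icc 1 d, f ((d : ℝ) - (s : ℝ)) = ∑ m ∈ Finset.range d, f (m : ℝ) := by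
  apply Finset.sum_nbij' (i := fun s => d - s) (j := fun m => d - m)
  · intro s hs
    simp only [Finset.mem_Icc] at hs
    simp only [Finset.mem_range]
    omega
  · intro m hm
    simp only [Finset.mem_range] at hm
    simp only [Finset.mem_Icc]
    omega
  · intro s hs; simp only [Finset.mem_Icc] at hs; omega
  · intro m hm; simp only [Finset.mem_range] at hm; omega
  · intro s hs
    simp only [Finset.mem_Icc] at hs
    rw [Nat.cast_sub hs.2]

lemma alpha_tendsto (d : ℕ) (p : ℕ) :
    Tendsto (fun ν : ℝ => alpha d ν p) atTop
      (nhds ((1 / (d : ℝ)) * ∑ s ∈ Finset.Icc 1 d,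
        ∏ k ∈ Finset.range p, (((d : ℝ) - (s : ℝ) - (k : ℝ)) / ((d : ℝ) - (k : ℝ))))) := by
  unfold alpha
  apply Tendsto.const_mul
  have : Tendsto (fun ν : ℝ => ∑ s ∈ Finset.Icc 1 d,
      (∏ k ∈ Finset.range p, (((d : ℝ) - (s : ℝ) - (k : ℝ)) / ((d : ℝ) - (k : ℝ)))) *
        psi ν ((s : ℝ) / (d : ℝ))) atTop
      (nhds (∑ s ∈ Finset.Icc 1 d,
      (∏ k ∈ Finset.range p, (((d : ℝ) - (s : ℝ) - (k : ℝ)) / ((d : ℝ) - (k : ℝ)))) * 1)) := by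
    apply tendsto_finset_sum
    intro s _
    exact (psi_tendsto _).const_mul _
  simpa using this

lemma alpha0_lim (d : ℕ) (hd : 1 ≤ d) :
    Tendsto (fun ν : ℝ => alpha d ν 0) atTop (nhds 1) := by
  have := alpha_tendsto d 0
  have hd0 : (d : ℝ) ≠ 0 := Nat.cast_ne_zero.2 (by omega)
  simpa [Finset.prod_range_zero, Nat.Icc_eq_range', Finset.sum_const, hd0] using this

lemma alpha1_lim (d : ℕ) (hd : 1 ≤ d) :
    Tendsto (fun ν : ℝ => alpha d ν 1) atTop (nhds (((d : ℝ) - 1) / (2 * d))) := by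
  have h := alpha_tendsto d 1
  have hd0 : (d : ℝ) ≠ 0 := Nat.cast_ne_zero.2 (by omega)
  have e : (1 / (d : ℝ)) * ∑ s ∈ Finset.Icc 1 d,
      ∏ k ∈ Finset.range 1, (((d : ℝ) - (s : ℝ) - (k : ℝ)) / ((d : ℝ) - (k : ℝ)))
      = ((d : ℝ) - 1) / (2 * d) := by
    have : ∑ s ∈ Finset.Icc 1 d,
        ∏ k ∈ Finset.range 1, (((d : ℝ) - (s : ℝ) - (k : ℝ)) / ((d : ℝ) - (k : ℝ)))
        = ∑ m ∈ Finset.range d, ((m : ℝ) / (d : ℝ)) := by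
      rw [← reindex d (fun x => x / (d : ℝ))]
      apply Finset.sum_congr rfl
      intro s _
      simp
    rw [this, ← Finset.sum_div, sum_m]
    field_simp
  rwa [e] at h

lemma alpha2_lim (d : ℕ) (hd : 2 ≤ d) :
    Tendsto (fun ν : ℝ => alpha d ν 2) atTop (nhds (((d : ℝ) - 2) / (3 * d))) := by
  have h := alpha_tendsto d 2
  have hd0 : (d : ℝ) ≠ 0 := Nat.cast_ne_zero.2 (by omega)
  have hd1 : (d : ℝ) - 1 ≠ 0 := by
    have : (2 : ℝ) ≤ (d : ℝ) := by exact_mod_cast hd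
    nlinarith
  have e : (1 / (d : ℝ)) * ∑ s ∈ Finset.Icc 1 d,
      ∏ k ∈ Finset.range 2, (((d : ℝ) - (s : ℝ) - (k : ℝ)) / ((d : ℝ) - (k : ℝ)))
      = ((d : ℝ) - 2) / (3 * d) := by
    have h1 : ∑ s ∈ Finset.Icc 1 d,
        ∏ k ∈ Finset.range 2, (((d : ℝ) - (s : ℝ) - (k : ℝ)) / ((d : ℝ) - (k : ℝ)))
        = ∑ m ∈ Finset.range d, ((m : ℝ) * ((m : ℝ) - 1) / ((d : ℝ) * ((d : ℝ) - 1))) := by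
      rw [← reindex d (fun x => x * (x - 1) / ((d : ℝ) * ((d : ℝ) - 1)))]
      apply Finset.sum_congr rfl
      intro s _
      rw [Finset.prod_range_succ, Finset.prod_range_one]
      push_cast
      rw [div_mul_div_comm]
      ring_nf
    rw [h1, ← Finset.sum_div, sum_mm]
    field_simp
  rwa [e] at h


/-- large-bandwidth limits of c_d and of the σᵢ/c_d. -/
theorem sigma_over_c_tendsto (d : ℕ) (hd : 2 ≤ d) :
    Filter.Tendsto (fun ν : ℝ => cConst d ν) Filter.atTop
        (nhds (((d : ℝ) ^ 2 - 1) / (12 * (d : ℝ))))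
      ∧ Filter.Tendsto (fun ν : ℝ => sigma0 d ν / cConst d ν) Filter.atTop
        (nhds (2 * (2 * (d : ℝ) - 1) / ((d : ℝ) + 1)))
      ∧ Filter.Tendsto (fun ν : ℝ => sigma1 d ν / cConst d ν) Filter.atTop
        (nhds (-6 / ((d : ℝ) + 1)))
      ∧ Filter.Tendsto (fun ν : ℝ => sigma2 d ν / cConst d ν) Filter.atTop
        (nhds (6 * ((d : ℝ) ^ 2 - 2 * (d : ℝ) + 3) / (((d : ℝ) + 1) * ((d : ℝ) - 1))))
      ∧ Filter.Tendsto (fun ν : ℝ => sigma3 d ν / cConst d ν) Filter.atTop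
        (nhds (-6 * ((d : ℝ) - 3) / (((d : ℝ) + 1) * ((d : ℝ) - 1)))) := by
  have hd2 : (2 : ℝ) ≤ (d : ℝ) := by exact_mod_cast hd
  have hd0 : (d : ℝ) ≠ 0 := by positivity
  have hm1 : (d : ℝ) - 1 ≠ 0 := by nlinarith
  have hp1 : (d : ℝ) + 1 ≠ 0 := by nlinarith
  have hsq : (d : ℝ) ^ 2 - 1 ≠ 0 := by nlinarith
  have h0 := alpha0_lim d (by omega)
  have h1 := alpha1_lim d (by omega)
  have h2 := alpha2_lim d hd
  -- c limit
  have hc : Filter.Tendsto (fun ν : ℝ => cConst d ν) Filter.atTop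
      (nhds (((d : ℝ) ^ 2 - 1) / (12 * (d : ℝ)))) := by
    have h : Filter.Tendsto (fun ν : ℝ => cConst d ν) Filter.atTop
        (nhds (((d : ℝ) - 1) * 1 * (((d : ℝ) - 2) / (3 * d)) -
          (d : ℝ) * (((d : ℝ) - 1) / (2 * d)) ^ 2 + 1 * (((d : ℝ) - 1) / (2 * d)))) := by
      unfold cConst
      exact (((h0.const_mul _).mul h2).sub ((h1.pow 2).const_mul _)).add (h0.mul h1)
    have e : ((d : ℝ) - 1) * 1 * (((d : ℝ) - 2) / (3 * d)) -
        (d : ℝ) * (((d : ℝ) - 1) / (2 * d)) ^ 2 + 1 * (((d : ℝ) - 1) / (2 * d))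
        = ((d : ℝ) ^ 2 - 1) / (12 * (d : ℝ)) := by field_simp; ring
    rwa [e] at h
  have hcne : ((d : ℝ) ^ 2 - 1) / (12 * (d : ℝ)) ≠ 0 := by
    apply div_ne_zero hsq; positivity
  have hden : Filter.Tendsto (fun ν : ℝ => alpha d ν 1 - alpha d ν 2) Filter.atTop
      (nhds (((d : ℝ) + 1) / (6 * d))) := by
    have h := h1.sub h2
    have e : ((d : ℝ) - 1) / (2 * d) - ((d : ℝ) - 2) / (3 * d) = ((d : ℝ) + 1) / (6 * d) := by
      field_simp; ring
    rwa [e] at h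
  have hdenne : ((d : ℝ) + 1) / (6 * d) ≠ 0 := by
    apply div_ne_zero hp1; positivity
  refine ⟨hc, ?_, ?_, ?_, ?_⟩
  · have hs : Filter.Tendsto (fun ν : ℝ => sigma0 d ν) Filter.atTop
        (nhds (((d : ℝ) - 1) * (((d : ℝ) - 2) / (3 * d)) + ((d : ℝ) - 1) / (2 * d))) := by
      unfold sigma0
      exact (h2.const_mul _).add h1
    have h := hs.div hc hcne
    have e : (((d : ℝ) - 1) * (((d : ℝ) - 2) / (3 * d)) + ((d : ℝ) - 1) / (2 * d)) /
        (((d : ℝ) ^ 2 - 1) / (12 * (d : ℝ))) = 2 * (2 * (d : ℝ) - 1) / ((d : ℝ) + 1) := by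
      field_simp
      ring
    rwa [e] at h
  · have hs : Filter.Tendsto (fun ν : ℝ => sigma1 d ν) Filter.atTop
        (nhds (-(((d : ℝ) - 1) / (2 * d)))) := h1.neg
    have h := hs.div hc hcne
    have e : -(((d : ℝ) - 1) / (2 * d)) / (((d : ℝ) ^ 2 - 1) / (12 * (d : ℝ)))
        = -6 / ((d : ℝ) + 1) := by
      rw [div_eq_div_iff (by assumption) hp1]
      field_simp
      ring
    rwa [e] at h
  · have hnum : Filter.Tendsto (fun ν : ℝ => ((d : ℝ) - 2) * alpha d ν 0 * alpha d ν 2 -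
        ((d : ℝ) - 1) * (alpha d ν 1) ^ 2 + alpha d ν 0 * alpha d ν 1) Filter.atTop
        (nhds (((d : ℝ) - 2) * 1 * (((d : ℝ) - 2) / (3 * d)) -
          ((d : ℝ) - 1) * (((d : ℝ) - 1) / (2 * d)) ^ 2 + 1 * (((d : ℝ) - 1) / (2 * d)))) :=
      (((h0.const_mul _).mul h2).sub ((h1.pow 2).const_mul _)).add (h0.mul h1)
    have hs : Filter.Tendsto (fun ν : ℝ => sigma2 d ν) Filter.atTop
        (nhds ((((d : ℝ) - 2) * 1 * (((d : ℝ) - 2) / (3 * d)) -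
          ((d : ℝ) - 1) * (((d : ℝ) - 1) / (2 * d)) ^ 2 + 1 * (((d : ℝ) - 1) / (2 * d))) /
          (((d : ℝ) + 1) / (6 * d)))) := hnum.div hden hdenne
    have h := hs.div hc hcne
    have e : (((d : ℝ) - 2) * 1 * (((d : ℝ) - 2) / (3 * d)) -
          ((d : ℝ) - 1) * (((d : ℝ) - 1) / (2 * d)) ^ 2 + 1 * (((d : ℝ) - 1) / (2 * d))) /
          (((d : ℝ) + 1) / (6 * d)) / (((d : ℝ) ^ 2 - 1) / (12 * (d : ℝ)))
        = 6 * ((d : ℝ) ^ 2 - 2 * (d : ℝ) + 3) / (((d : ℝ) + 1) * ((d : ℝ) - 1)) := by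
      field_simp
      ring
    rwa [e] at h
  · have hnum : Filter.Tendsto (fun ν : ℝ => (alpha d ν 1) ^ 2 - alpha d ν 0 * alpha d ν 2)
        Filter.atTop
        (nhds ((((d : ℝ) - 1) / (2 * d)) ^ 2 - 1 * (((d : ℝ) - 2) / (3 * d)))) :=
      (h1.pow 2).sub (h0.mul h2)
    have hs : Filter.Tendsto (fun ν : ℝ => sigma3 d ν) Filter.atTop
        (nhds (((((d : ℝ) - 1) / (2 * d)) ^ 2 - 1 * (((d : ℝ) - 2) / (3 * d))) /
          (((d : ℝ) + 1) / (6 * d)))) := hnum.div hden hdenne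
    have h := hs.div hc hcne
    have e : ((((d : ℝ) - 1) / (2 * d)) ^ 2 - 1 * (((d : ℝ) - 2) / (3 * d))) /
          (((d : ℝ) + 1) / (6 * d)) / (((d : ℝ) ^ 2 - 1) / (12 * (d : ℝ)))
        = -6 * ((d : ℝ) - 3) / (((d : ℝ) + 1) * ((d : ℝ) - 1)) := by
      field_simp
      ring
    rwa [e] at h
end
end

section
/- Let d ≥ 1, ν > 0 and n ≥ 1. Let S_1,…,S_n be i.i.d. copies of the LIME random subset S of {1,…,d}, and for each i set π_i = ψ_ν(|S_i|/d) and ζ_i = (1, 1{1 ∉ S_i}, …, 1{d ∉ S_i}) ∈ ℝ^{d+1}. Define the random matrix Σ̂_n = (1/n) Σ_{i=1}^n π_i ζ_i ζ_iᵀ and its expectation Σ = E[π ζ ζᵀ]. Then for every t ≥ 0, P(‖Σ̂_n − Σ‖_op ≥ t) ≤ 4d · exp(−n t² / (32 d²)), where ‖·‖_op is the ℓ²→ℓ² operator norm on ℝ^{(d+1)×(d+1)}. -/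
noncomputable section

open MeasureTheory

/-- Subsets of a finite index set carry the discrete σ-algebra. -/
instance finsetMeasurableSpace (d : ℕ) : MeasurableSpace (Finset (Fin d)) := ⊤

/-- The probability that the LIME random subset equals a given set `A`. -/
def limeWeight (d : ℕ) (A : Finset (Fin d)) : ℝ :=
  if 1 ≤ A.card then (1 / (d : ℝ)) * ((d.choose A.card : ℝ))⁻¹ else 0

/-- The vector of interpretable features with a leading 1 for the intercept:
ζ(S) = (1, z₁, …, z_d) with z_j = 1{j ∉ S}. -/
def zeta (d : ℕ) (S : Finset (Fin d)) : Fin (d + 1) → ℝ :=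
  Fin.cons 1 (fun j : Fin d => if j ∉ S then (1 : ℝ) else 0)

/-- The ℓ²→ℓ² operator norm of a square real matrix. -/
def opNorm {m : ℕ} (A : Matrix (Fin m) (Fin m) ℝ) : ℝ :=
  ‖Matrix.toEuclideanCLM (𝕜 := ℝ) A‖

/-- The Euclidean norm of a vector of ℝ^m. -/
def enorm {m : ℕ} (v : Fin m → ℝ) : ℝ := Real.sqrt (∑ a, (v a) ^ 2)

/-- Σ = E[π ζ ζᵀ] ∈ ℝ^{(d+1)×(d+1)}. -/
def SigmaE (d : ℕ) (ν : ℝ) : Matrix (Fin (d + 1)) (Fin (d + 1)) ℝ :=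
  Matrix.of fun a b =>
    limeExp d (fun S => psi ν ((S.card : ℝ) / (d : ℝ)) * zeta d S a * zeta d S b)

/-! ### Auxiliary lemmas -/

lemma my_opNorm_le_frobenius {m : ℕ} (A : Matrix (Fin m) (Fin m) ℝ) :
    ‖Matrix.toEuclideanCLM (𝕜 := ℝ) A‖ ≤ Real.sqrt (∑ a, ∑ b, (A a b)^2) := by
  apply ContinuousLinearMap.opNorm_le_bound _ (Real.sqrt_nonneg _)
  intro x
  have hcoord : ∀ i, (Matrix.toEuclideanCLM (𝕜 := ℝ) A) x i = ∑ j, A i j * x j := by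
    intro i; rfl
  rw [EuclideanSpace.norm_eq, EuclideanSpace.norm_eq]
  rw [← Real.sqrt_mul (by positivity)]
  apply Real.sqrt_le_sqrt
  simp only [hcoord, Real.norm_eq_abs, sq_abs]
  rw [Finset.sum_mul]
  apply Finset.sum_le_sum
  intro i _
  calc (∑ j, A i j * x j) ^ 2 ≤ (∑ j, (A i j)^2) * ∑ j, (x j)^2 :=
        Finset.sum_mul_sq_le_sq_mul_sq _ _ _
    _ = _ := rfl

lemma my_exp_le_cosh_add (l x : ℝ) (hx : |x| ≤ 1) :
    Real.exp (l * x) ≤ Real.cosh l + x * Real.sinh l := by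
  obtain ⟨hx1, hx2⟩ := abs_le.1 hx
  have ha : (0:ℝ) ≤ (1 - x)/2 := by linarith
  have hb : (0:ℝ) ≤ (1 + x)/2 := by linarith
  have hab : (1 - x)/2 + (1 + x)/2 = 1 := by ring
  have := convexOn_exp.2 (Set.mem_univ (-l)) (Set.mem_univ l) ha hb hab
  simp only [smul_eq_mul] at this
  have h1 : (1 - x)/2 * (-l) + (1 + x)/2 * l = l * x := by ring
  rw [h1] at this
  refine this.trans (le_of_eq ?_)
  rw [Real.cosh_eq, Real.sinh_eq]; ring

lemma my_mgf_le {Ω : Type} [MeasurableSpace Ω] (P : Measure Ω) [IsProbabilityMeasure P]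
    (X : Ω → ℝ) (hm : Measurable X) (hb : ∀ ω, |X ω| ≤ 1) (h0 : ∫ ω, X ω ∂P = 0) (l : ℝ) :
    ProbabilityTheory.mgf X P l ≤ Real.exp (l^2/2) := by
  have hXint : Integrable X P :=
    (integrable_const (1:ℝ)).mono' hm.aestronglyMeasurable
      (ae_of_all _ fun ω => by simpa using hb ω)
  have hint1 : Integrable (fun ω => Real.exp (l * X ω)) P := by
    refine (integrable_const (Real.exp |l|)).mono'
      ((hm.const_mul l).exp).aestronglyMeasurable (ae_of_all _ fun ω => ?_)
    rw [Real.norm_eq_abs, Real.abs_exp]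
    apply Real.exp_le_exp.2
    calc l * X ω ≤ |l * X ω| := le_abs_self _
      _ = |l| * |X ω| := abs_mul _ _
      _ ≤ |l| * 1 := by gcongr; exact hb ω
      _ = |l| := mul_one _
  have hint2 : Integrable (fun ω => Real.cosh l + X ω * Real.sinh l) P :=
    (integrable_const _).add (hXint.mul_const _)
  calc ProbabilityTheory.mgf X P l = ∫ ω, Real.exp (l * X ω) ∂P := rfl
    _ ≤ ∫ ω, (Real.cosh l + X ω * Real.sinh l) ∂P :=
        integral_mono hint1 hint2 (fun ω => my_exp_le_cosh_add l (X ω) (hb ω))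
    _ = Real.cosh l + (∫ ω, X ω ∂P) * Real.sinh l := by
        rw [integral_add (integrable_const _) (hXint.mul_const _), integral_const,
          integral_mul_const]
        simp
    _ = Real.cosh l := by rw [h0]; ring_nf
    _ ≤ Real.exp (l^2/2) := by simpa using Real.cosh_le_exp_half_sq l

lemma my_hoeffding {Ω : Type} [MeasurableSpace Ω] (P : Measure Ω) [IsProbabilityMeasure P]
    (n : ℕ) (hn : 1 ≤ n) (X : Fin n → Ω → ℝ)
    (hindep : ProbabilityTheory.iIndepFun X P)
    (hmeas : ∀ i, Measurable (X i))
    (hb : ∀ i ω, |X i ω| ≤ 1) (h0 : ∀ i, ∫ ω, X i ω ∂P = 0)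
    (ε : ℝ) (hε : 0 ≤ ε) :
    P {ω | ε ≤ ∑ i, X i ω} ≤ ENNReal.ofReal (Real.exp (-ε^2/(2*n))) := by
  have hnpos : (0:ℝ) < n := by exact_mod_cast hn
  set l : ℝ := ε / n with hl
  have hl0 : 0 ≤ l := div_nonneg hε hnpos.le
  have hinti : ∀ i ∈ Finset.univ, Integrable (fun ω => Real.exp (l * X i ω)) P := by
    intro i _
    refine (integrable_const (Real.exp |l|)).mono'
      (((hmeas i).const_mul l).exp).aestronglyMeasurable (ae_of_all _ fun ω => ?_)
    rw [Real.norm_eq_abs, Real.abs_exp]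
    apply Real.exp_le_exp.2
    calc l * X i ω ≤ |l * X i ω| := le_abs_self _
      _ = |l| * |X i ω| := abs_mul _ _
      _ ≤ |l| * 1 := by gcongr; exact hb i ω
      _ = |l| := mul_one _
  have hint : Integrable (fun ω => Real.exp (l * (∑ i, X i) ω)) P :=
    hindep.integrable_exp_mul_sum hmeas hinti
  have hch := ProbabilityTheory.measure_ge_le_exp_mul_mgf (μ := P) (X := ∑ i, X i) ε hl0 hint
  have hset : {ω | ε ≤ ∑ i, X i ω} = {ω | ε ≤ (∑ i, X i) ω} := by
    ext ω; simp [Finset.sum_apply]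
  have hmgf : ProbabilityTheory.mgf (∑ i, X i) P l ≤ Real.exp (n * (l^2/2)) := by
    rw [hindep.mgf_sum hmeas]
    calc ∏ i : Fin n, ProbabilityTheory.mgf (X i) P l
        ≤ ∏ _i : Fin n, Real.exp (l^2/2) := by
          refine Finset.prod_le_prod (fun i _ => ProbabilityTheory.mgf_nonneg) ?_
          exact fun i _ => my_mgf_le P (X i) (hmeas i) (hb i) (h0 i) l
      _ = Real.exp (n * (l^2/2)) := by
          rw [Finset.prod_const, ← Real.exp_nat_mul]; simp
  rw [hset]
  rw [ENNReal.le_ofReal_iff_toReal_le (measure_ne_top _ _) (Real.exp_nonneg _)]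
  calc (P {ω | ε ≤ (∑ i, X i) ω}).toReal
      ≤ Real.exp (-l * ε) * ProbabilityTheory.mgf (∑ i, X i) P l := hch
    _ ≤ Real.exp (-l * ε) * Real.exp (n * (l^2/2)) := by gcongr
    _ = Real.exp (-l * ε + n * (l^2/2)) := (Real.exp_add _ _).symm
    _ = Real.exp (-ε^2/(2*n)) := by
        congr 1
        rw [hl]; field_simp; ring

lemma limeWeight_nonneg (d : ℕ) (A : Finset (Fin d)) : 0 ≤ limeWeight d A := by
  unfold limeWeight; split <;> positivity

lemma my_limeExp_eq_sum (d : ℕ) (g : Finset (Fin d) → ℝ) :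
    limeExp d g = ∑ A : Finset (Fin d), limeWeight d A * g A := by
  classical
  have hmaps : ∀ A : Finset (Fin d), A ∈ Finset.univ → A.card ∈ Finset.range (d + 1) := by
    intro A _
    simp only [Finset.mem_range, Nat.lt_succ_iff]
    simpa using A.card_le_univ
  rw [← Finset.sum_fiberwise_of_maps_to hmaps (fun A => limeWeight d A * g A)]
  have hfib : ∀ s ∈ Finset.range (d + 1),
      ∑ A ∈ Finset.univ.filter (fun A : Finset (Fin d) => A.card = s),
        limeWeight d A * g A
      = (if 1 ≤ s then (1 / (d : ℝ)) * ((d.choose s : ℝ))⁻¹ *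
          ∑ S ∈ Finset.univ.filter (fun S : Finset (Fin d) => S.card = s), g S else 0) := by
    intro s _
    split_ifs with h1
    · rw [Finset.mul_sum]
      apply Finset.sum_congr rfl
      intro A hA
      rw [Finset.mem_filter] at hA
      rw [limeWeight, hA.2, if_pos h1, mul_assoc]
    · apply Finset.sum_eq_zero
      intro A hA
      rw [Finset.mem_filter] at hA
      rw [limeWeight, hA.2, if_neg h1, zero_mul]
  rw [Finset.sum_congr rfl hfib]
  rw [Finset.sum_ite, Finset.sum_const, smul_zero, add_zero]
  have hfilter : (Finset.range (d + 1)).filter (fun s => 1 ≤ s) = Finset.Icc 1 d := by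
    ext s; simp [Finset.mem_range, Finset.mem_Icc, Nat.lt_succ_iff]; omega
  rw [hfilter, limeExp, Finset.mul_sum]
  apply Finset.sum_congr rfl
  intro s _; ring

lemma my_integral_eq (d : ℕ) {Ω : Type} [MeasurableSpace Ω] (P : Measure Ω)
    [IsProbabilityMeasure P] (T : Ω → Finset (Fin d)) (hT : Measurable T)
    (hdist : ∀ A : Finset (Fin d), P {ω | T ω = A} = ENNReal.ofReal (limeWeight d A))
    (f : Finset (Fin d) → ℝ) :
    ∫ ω, f (T ω) ∂P = limeExp d f := by
  classical
  have hrepr : (fun ω => f (T ω)) =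
      fun ω => ∑ A : Finset (Fin d), Set.indicator (T ⁻¹' {A}) (fun _ => f A) ω := by
    funext ω
    rw [Finset.sum_eq_single (T ω)]
    · simp [Set.indicator_of_mem, Set.mem_preimage]
    · intro A _ hA
      apply Set.indicator_of_notMem
      simp only [Set.mem_preimage, Set.mem_singleton_iff]
      exact fun h => hA (h ▸ rfl)
    · simp
  have hmeasA : ∀ A : Finset (Fin d), MeasurableSet (T ⁻¹' {A}) :=
    fun A => hT (MeasurableSet.singleton A)
  rw [hrepr, integral_finset_sum]
  · have hterm : ∀ A : Finset (Fin d),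
        ∫ ω, Set.indicator (T ⁻¹' {A}) (fun _ => f A) ω ∂P = limeWeight d A * f A := by
      intro A
      rw [integral_indicator_const _ (hmeasA A)]
      have hpre : T ⁻¹' {A} = {ω | T ω = A} := by ext ω; simp
      rw [hpre, measureReal_def, hdist A, ENNReal.toReal_ofReal (limeWeight_nonneg d A)]
      simp [mul_comm]
    rw [Finset.sum_congr rfl (fun A _ => hterm A), ← my_limeExp_eq_sum]
  · intro A _
    exact (integrable_const (f A)).indicator (hmeasA A)

lemma my_final_real (d n : ℕ) (hd : 1 ≤ d) (t : ℝ)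
    (hcase : Real.log (4*d) < (n : ℝ) * t^2 / (32 * (d:ℝ)^2)) :
    2*((d:ℝ)+1)^2 * Real.exp (-((n:ℝ) * t^2) / (2*((d:ℝ)+1)^2)) ≤
    4*(d:ℝ) * Real.exp (-((n:ℝ) * t^2) / (32*(d:ℝ)^2)) := by
  have hd1 : (1:ℝ) ≤ d := by exact_mod_cast hd
  set u : ℝ := (n : ℝ) * t^2 / (32 * (d:ℝ)^2) with hu
  have hu0 : 0 < u := lt_of_le_of_lt (Real.log_nonneg (by linarith)) hcase
  have hnt : 0 ≤ (n:ℝ) * t^2 := by positivity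
  have h4 : ((d:ℝ)+1)^2 ≤ 4 * (d:ℝ)^2 := by nlinarith
  have hstep1 : Real.exp (-((n:ℝ) * t^2) / (2*((d:ℝ)+1)^2)) ≤ Real.exp (-(4*u)) := by
    apply Real.exp_le_exp.2
    have h4u : 4 * u = ((n:ℝ)*t^2)/(8*(d:ℝ)^2) := by rw [hu]; ring
    rw [neg_div, neg_le_neg_iff, h4u,
      div_le_div_iff₀ (by positivity) (by positivity)]
    nlinarith [mul_le_mul_of_nonneg_left h4 hnt]
  have hexp3 : (4*(d:ℝ))^3 ≤ Real.exp (3*u) := by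
    have hmon : Real.exp (3 * Real.log (4*d)) ≤ Real.exp (3*u) :=
      Real.exp_le_exp.2 (by nlinarith)
    calc (4*(d:ℝ))^3 = Real.exp (Real.log (4*d))^3 := by
          rw [Real.exp_log (by linarith)]
      _ = Real.exp (3 * Real.log (4*d)) := by
          rw [← Real.exp_nat_mul]; norm_num
      _ ≤ _ := hmon
  calc 2*((d:ℝ)+1)^2 * Real.exp (-((n:ℝ) * t^2) / (2*((d:ℝ)+1)^2))
      ≤ 2*((d:ℝ)+1)^2 * Real.exp (-(4*u)) := by gcongr
    _ ≤ 4*(d:ℝ) * Real.exp (-u) := by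
        have h1 : Real.exp (-(4*u)) = Real.exp (-u) * (Real.exp (3*u))⁻¹ := by
          rw [← Real.exp_neg, ← Real.exp_add]; ring_nf
        rw [h1, ← mul_assoc, mul_inv_le_iff₀ (Real.exp_pos _)]
        have hpoly : 2*((d:ℝ)+1)^2 ≤ 4*(d:ℝ)*(4*(d:ℝ))^3 := by nlinarith
        calc 2*((d:ℝ)+1)^2 * Real.exp (-u) ≤ 4*(d:ℝ)*(4*(d:ℝ))^3 * Real.exp (-u) :=
              mul_le_mul_of_nonneg_right hpoly (Real.exp_pos _).le
          _ ≤ 4*(d:ℝ)*Real.exp (3*u) * Real.exp (-u) := by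
              have h5 := mul_le_mul_of_nonneg_left hexp3 (by positivity : (0:ℝ) ≤ 4*(d:ℝ))
              exact mul_le_mul_of_nonneg_right h5 (Real.exp_pos _).le
          _ = 4*(d:ℝ)*Real.exp (-u) * Real.exp (3*u) := by ring
    _ = 4*(d:ℝ) * Real.exp (-((n:ℝ) * t^2) / (32*(d:ℝ)^2)) := by rw [hu, neg_div]

/-- concentration of the empirical covariance matrix
Σ̂_n = (1/n)∑ᵢ πᵢ ζᵢ ζᵢᵀ around Σ = E[π ζ ζᵀ] in operator norm:
P(‖Σ̂_n − Σ‖_op ≥ t) ≤ 4d·exp(−nt²/(32d²)). -/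
theorem SigmaHat_concentration (d : ℕ) (hd : 1 ≤ d) (ν : ℝ) (hν : 0 < ν)
    (n : ℕ) (hn : 1 ≤ n) {Ω : Type} [MeasurableSpace Ω] (P : Measure Ω)
    [IsProbabilityMeasure P] (Ss : Fin n → Ω → Finset (Fin d))
    (hmeas : ∀ i, Measurable (Ss i))
    (hindep : ProbabilityTheory.iIndepFun Ss P)
    (hdist : ∀ i, ∀ A : Finset (Fin d),
      P {ω | Ss i ω = A} = ENNReal.ofReal (limeWeight d A)) :
    ∀ t : ℝ, 0 ≤ t →
      P {ω | t ≤ opNorm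
            ((n : ℝ)⁻¹ • ∑ i : Fin n, psi ν (((Ss i ω).card : ℝ) / (d : ℝ)) •
                Matrix.vecMulVec (zeta d (Ss i ω)) (zeta d (Ss i ω))
              - SigmaE d ν)}
        ≤ ENNReal.ofReal (4 * (d : ℝ) *
            Real.exp (-((n : ℝ) * t ^ 2) / (32 * (d : ℝ) ^ 2))) := by
  intro t ht
  classical
  have hdR : (1:ℝ) ≤ d := by exact_mod_cast hd
  have hnR : (0:ℝ) < n := by exact_mod_cast hn
  -- Case 1 : the bound is trivially at least 1
  by_cases hcase : (n:ℝ) * t^2 / (32*(d:ℝ)^2) ≤ Real.log (4*(d:ℝ))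
  · refine le_trans prob_le_one ?_
    rw [ENNReal.one_le_ofReal]
    have hexp : (4*(d:ℝ))⁻¹ ≤ Real.exp (-((n:ℝ) * t^2) / (32*(d:ℝ)^2)) := by
      have h1 : Real.exp (-Real.log (4*(d:ℝ))) ≤
          Real.exp (-((n:ℝ) * t^2) / (32*(d:ℝ)^2)) := by
        apply Real.exp_le_exp.2
        rw [neg_div]
        exact neg_le_neg hcase
      calc (4*(d:ℝ))⁻¹ = Real.exp (-Real.log (4*(d:ℝ))) := by
            rw [Real.exp_neg, Real.exp_log (by linarith)]
        _ ≤ _ := h1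
    calc (1:ℝ) = 4*(d:ℝ) * (4*(d:ℝ))⁻¹ := by
          rw [mul_inv_cancel₀ (by linarith : (4:ℝ)*(d:ℝ) ≠ 0)]
      _ ≤ 4 * (d:ℝ) * Real.exp (-((n:ℝ) * t ^ 2) / (32 * (d:ℝ) ^ 2)) :=
          mul_le_mul_of_nonneg_left hexp (by linarith)
  · -- Case 2 : genuine concentration via entrywise Hoeffding + union bound
    push_neg at hcase
    set D : ℝ := (d:ℝ) + 1 with hD
    have hDpos : (0:ℝ) < D := by rw [hD]; linarith
    have hDne : D ≠ 0 := ne_of_gt hDpos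
    have hnne : (n:ℝ) ≠ 0 := ne_of_gt hnR
    set s : ℝ := t / D with hsdef
    have hs0 : 0 ≤ s := div_nonneg ht hDpos.le
    set g : Fin (d+1) → Fin (d+1) → Finset (Fin d) → ℝ :=
      fun a b S => psi ν ((S.card : ℝ) / (d:ℝ)) * zeta d S a * zeta d S b with hgdef
    have hz01 : ∀ (S : Finset (Fin d)) (a : Fin (d+1)), zeta d S a = 0 ∨ zeta d S a = 1 := by
      intro S a
      refine Fin.cases ?_ (fun j => ?_) a
      · right; simp [zeta]
      · simp only [zeta, Fin.cons_succ]
        by_cases hj : j ∈ S <;> simp [hj]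
    have hz0 : ∀ (S : Finset (Fin d)) (a : Fin (d+1)), 0 ≤ zeta d S a := by
      intro S a; rcases hz01 S a with h | h <;> rw [h] <;> norm_num
    have hpsi1 : ∀ x : ℝ, psi ν x ≤ 1 := by
      intro x
      rw [psi]
      calc Real.exp (-(1 - Real.sqrt (1 - x)) ^ 2 / (2 * ν ^ 2))
          ≤ Real.exp 0 := by
            apply Real.exp_le_exp.2
            apply div_nonpos_of_nonpos_of_nonneg (neg_nonpos_of_nonneg (sq_nonneg _))
            positivity
        _ = 1 := Real.exp_zero
    have hg0 : ∀ a b S, 0 ≤ g a b S := by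
      intro a b S
      exact mul_nonneg (mul_nonneg (Real.exp_pos _).le (hz0 S a)) (hz0 S b)
    have hg1 : ∀ a b S, g a b S ≤ 1 := by
      intro a b S
      rcases hz01 S b with h2 | h2
      · simp only [hgdef, h2, mul_zero]; norm_num
      · rcases hz01 S a with h1 | h1
        · simp only [hgdef, h1, h2, mul_zero, zero_mul, mul_one]; norm_num
        · simp only [hgdef, h1, h2, mul_one]; exact hpsi1 _
    set μm : Fin (d+1) → Fin (d+1) → ℝ := fun a b => limeExp d (g a b) with hμdef
    have hμ_int : ∀ (i : Fin n) (a b : Fin (d+1)), ∫ ω, g a b (Ss i ω) ∂P = μm a b :=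
      fun i a b => my_integral_eq d P (Ss i) (hmeas i) (hdist i) (g a b)
    have hGmeas : ∀ (a b : Fin (d+1)) (i : Fin n), Measurable (fun ω => g a b (Ss i ω)) := by
      intro a b i
      exact Measurable.comp (measurable_from_top (f := g a b)) (hmeas i)
    have hGint : ∀ (a b : Fin (d+1)) (i : Fin n), Integrable (fun ω => g a b (Ss i ω)) P := by
      intro a b i
      refine (integrable_const (1:ℝ)).mono' (hGmeas a b i).aestronglyMeasurable
        (ae_of_all _ fun ω => ?_)
      rw [Real.norm_eq_abs, abs_of_nonneg (hg0 _ _ _)]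
      exact hg1 _ _ _
    have hi0 : Nonempty (Fin n) := ⟨⟨0, hn⟩⟩
    obtain ⟨i0⟩ := hi0
    have hμ0 : ∀ a b, 0 ≤ μm a b := by
      intro a b; rw [← hμ_int i0 a b]
      exact integral_nonneg fun ω => hg0 a b _
    have hμ1 : ∀ a b, μm a b ≤ 1 := by
      intro a b; rw [← hμ_int i0 a b]
      calc ∫ ω, g a b (Ss i0 ω) ∂P ≤ ∫ _ω, (1:ℝ) ∂P :=
            integral_mono (hGint a b i0) (integrable_const _) (fun ω => hg1 a b _)
        _ = 1 := by simp
    set X : Fin (d+1) → Fin (d+1) → Fin n → Ω → ℝ :=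
      fun a b i ω => g a b (Ss i ω) - μm a b with hXdef
    have hXmeas : ∀ a b i, Measurable (X a b i) :=
      fun a b i => (hGmeas a b i).sub measurable_const
    have hXb : ∀ a b i ω, |X a b i ω| ≤ 1 := by
      intro a b i ω
      rw [abs_le]
      constructor
      · have h1 := hg0 a b (Ss i ω); have h2 := hμ1 a b
        simp only [hXdef]; linarith
      · have h1 := hg1 a b (Ss i ω); have h2 := hμ0 a b
        simp only [hXdef]; linarith
    have hX0 : ∀ a b i, ∫ ω, X a b i ω ∂P = 0 := by
      intro a b i
      simp only [hXdef]
      rw [integral_sub (hGint a b i) (integrable_const _), hμ_int i a b, integral_const]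
      simp
    have hXindep : ∀ a b,
        ProbabilityTheory.iIndepFun (X a b) P := by
      intro a b
      exact hindep.comp (fun _ S => g a b S - μm a b) (fun _ => measurable_from_top)
    have hXnegindep : ∀ a b,
        ProbabilityTheory.iIndepFun
          (fun i ω => -(X a b i ω)) P := by
      intro a b
      exact hindep.comp (fun _ S => -(g a b S - μm a b)) (fun _ => measurable_from_top)
    set B : ENNReal := ENNReal.ofReal (Real.exp (-((n:ℝ)*s)^2/(2*(n:ℝ)))) with hB
    have hH1 : ∀ a b, P {ω | (n:ℝ)*s ≤ ∑ i, X a b i ω} ≤ B := fun a b =>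
      my_hoeffding P n hn (X a b) (hXindep a b) (hXmeas a b) (hXb a b) (hX0 a b)
        ((n:ℝ)*s) (by positivity)
    have hH2 : ∀ a b, P {ω | (n:ℝ)*s ≤ ∑ i, -(X a b i ω)} ≤ B := by
      intro a b
      exact my_hoeffding P n hn (fun i ω => -(X a b i ω)) (hXnegindep a b)
        (fun i => (hXmeas a b i).neg) (fun i ω => by rw [abs_neg]; exact hXb a b i ω)
        (fun i => by rw [integral_neg, hX0 a b i, neg_zero]) ((n:ℝ)*s) (by positivity)
    have hentry : ∀ (ω : Ω) (a b : Fin (d+1)),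
        ((n : ℝ)⁻¹ • ∑ i : Fin n, psi ν (((Ss i ω).card : ℝ) / (d : ℝ)) •
            Matrix.vecMulVec (zeta d (Ss i ω)) (zeta d (Ss i ω)) - SigmaE d ν) a b
          = (n:ℝ)⁻¹ * ∑ i, X a b i ω := by
      intro ω a b
      have hsum : ∑ i, X a b i ω = (∑ i, g a b (Ss i ω)) - (n:ℝ) * μm a b := by
        simp only [hXdef]
        rw [Finset.sum_sub_distrib, Finset.sum_const, Finset.card_univ, Fintype.card_fin,
          nsmul_eq_mul]
      rw [hsum, mul_sub, ← mul_assoc, inv_mul_cancel₀ hnne, one_mul]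
      simp only [Matrix.sub_apply, Matrix.smul_apply, Matrix.sum_apply,
        Matrix.vecMulVec_apply, smul_eq_mul, SigmaE, Matrix.of_apply]
      simp only [hgdef, hμdef]
      have hsc : ∑ x : Fin n, psi ν (((Ss x ω).card : ℝ) / (d:ℝ)) *
            (zeta d (Ss x ω) a * zeta d (Ss x ω) b)
          = ∑ i : Fin n, psi ν (((Ss i ω).card : ℝ) / (d:ℝ)) *
            zeta d (Ss i ω) a * zeta d (Ss i ω) b :=
        Finset.sum_congr rfl fun i _ => by ring
      rw [hsc]
    have hsub : {ω | t ≤ opNorm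
          ((n : ℝ)⁻¹ • ∑ i : Fin n, psi ν (((Ss i ω).card : ℝ) / (d : ℝ)) •
              Matrix.vecMulVec (zeta d (Ss i ω)) (zeta d (Ss i ω)) - SigmaE d ν)}
        ⊆ ⋃ a : Fin (d+1), ⋃ b : Fin (d+1),
            ({ω | (n:ℝ)*s ≤ ∑ i, X a b i ω} ∪ {ω | (n:ℝ)*s ≤ ∑ i, -(X a b i ω)}) := by
      intro ω hω
      simp only [Set.mem_setOf_eq] at hω
      by_contra hnot
      simp only [Set.mem_iUnion, Set.mem_union, Set.mem_setOf_eq, not_exists, not_or,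
        not_le] at hnot
      have habs : ∀ a b : Fin (d+1), |∑ i, X a b i ω| < (n:ℝ)*s := by
        intro a b
        obtain ⟨h1, h2⟩ := hnot a b
        rw [Finset.sum_neg_distrib] at h2
        rw [abs_lt]; constructor <;> linarith
      have hM : ∀ a b : Fin (d+1),
          |((n : ℝ)⁻¹ • ∑ i : Fin n, psi ν (((Ss i ω).card : ℝ) / (d : ℝ)) •
              Matrix.vecMulVec (zeta d (Ss i ω)) (zeta d (Ss i ω)) - SigmaE d ν) a b| < s := by
        intro a b
        rw [hentry ω a b, abs_mul, abs_of_nonneg (inv_nonneg.2 hnR.le)]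
        calc (n:ℝ)⁻¹ * |∑ i, X a b i ω| < (n:ℝ)⁻¹ * ((n:ℝ)*s) :=
              mul_lt_mul_of_pos_left (habs a b) (by positivity)
          _ = s := by field_simp
      have h3 : (∑ a, ∑ b,
          (((n : ℝ)⁻¹ • ∑ i : Fin n, psi ν (((Ss i ω).card : ℝ) / (d : ℝ)) •
              Matrix.vecMulVec (zeta d (Ss i ω)) (zeta d (Ss i ω)) - SigmaE d ν) a b)^2)
          < ∑ _a : Fin (d+1), ∑ _b : Fin (d+1), s^2 := by
        refine Finset.sum_lt_sum_of_nonempty Finset.univ_nonempty (fun a _ => ?_)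
        refine Finset.sum_lt_sum_of_nonempty Finset.univ_nonempty (fun b _ => ?_)
        have h := abs_lt.1 (hM a b)
        exact sq_lt_sq' h.1 h.2
      have h4 : (∑ _a : Fin (d+1), ∑ _b : Fin (d+1), (s:ℝ)^2) = (D*s)^2 := by
        simp only [Finset.sum_const, Finset.card_univ, Fintype.card_fin, nsmul_eq_mul]
        rw [hD]; push_cast; ring
      have h6 : Real.sqrt (∑ a, ∑ b,
          (((n : ℝ)⁻¹ • ∑ i : Fin n, psi ν (((Ss i ω).card : ℝ) / (d : ℝ)) •
              Matrix.vecMulVec (zeta d (Ss i ω)) (zeta d (Ss i ω)) - SigmaE d ν) a b)^2)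
          < D * s := by
        have h7 := Real.sqrt_lt_sqrt (by positivity) (h4 ▸ h3)
        rwa [Real.sqrt_sq (by positivity)] at h7
      have hDs : D * s = t := by
        rw [hsdef]; field_simp
      rw [hDs] at h6
      have h8 := lt_of_le_of_lt (le_trans hω (my_opNorm_le_frobenius _)) h6
      exact lt_irrefl t h8
    refine le_trans (measure_mono hsub) ?_
    calc P (⋃ a : Fin (d+1), ⋃ b : Fin (d+1),
            ({ω | (n:ℝ)*s ≤ ∑ i, X a b i ω} ∪ {ω | (n:ℝ)*s ≤ ∑ i, -(X a b i ω)}))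
        ≤ ∑ a : Fin (d+1), P (⋃ b : Fin (d+1),
            ({ω | (n:ℝ)*s ≤ ∑ i, X a b i ω} ∪ {ω | (n:ℝ)*s ≤ ∑ i, -(X a b i ω)})) :=
          measure_iUnion_fintype_le _ _
      _ ≤ ∑ a : Fin (d+1), ∑ b : Fin (d+1),
            P ({ω | (n:ℝ)*s ≤ ∑ i, X a b i ω} ∪ {ω | (n:ℝ)*s ≤ ∑ i, -(X a b i ω)}) :=
          Finset.sum_le_sum fun a _ => measure_iUnion_fintype_le _ _
      _ ≤ ∑ _a : Fin (d+1), ∑ _b : Fin (d+1), (B + B) :=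
          Finset.sum_le_sum fun a _ => Finset.sum_le_sum fun b _ =>
            le_trans (measure_union_le _ _) (add_le_add (hH1 a b) (hH2 a b))
      _ = (d+1) • ((d+1) • (B + B)) := by
          simp [Finset.sum_const, Finset.card_univ]
      _ = ENNReal.ofReal (((d:ℝ)+1) * (((d:ℝ)+1) *
            (2 * Real.exp (-((n:ℝ)*s)^2/(2*(n:ℝ)))))) := by
          rw [hB, ← ENNReal.ofReal_add (Real.exp_nonneg _) (Real.exp_nonneg _)]
          rw [nsmul_eq_mul, nsmul_eq_mul]
          rw [← ENNReal.ofReal_natCast (d+1)]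
          rw [← ENNReal.ofReal_mul (by positivity), ← ENNReal.ofReal_mul (by positivity)]
          congr 1
          push_cast
          ring
      _ ≤ ENNReal.ofReal (4 * (d : ℝ) *
            Real.exp (-((n : ℝ) * t ^ 2) / (32 * (d : ℝ) ^ 2))) := by
          apply ENNReal.ofReal_le_ofReal
          have hexp_eq : Real.exp (-((n:ℝ)*s)^2/(2*(n:ℝ)))
              = Real.exp (-((n:ℝ)*t^2)/(2*((d:ℝ)+1)^2)) := by
            congr 1
            rw [hsdef, hD]
            field_simp
          rw [hexp_eq]
          have := my_final_real d n hd t hcase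
          calc ((d:ℝ)+1) * (((d:ℝ)+1) * (2 * Real.exp (-((n:ℝ)*t^2)/(2*((d:ℝ)+1)^2))))
              = 2*((d:ℝ)+1)^2 * Real.exp (-((n:ℝ) * t^2) / (2*((d:ℝ)+1)^2)) := by ring
            _ ≤ _ := this
end
end

section
/- Let d ≥ 1, ν > 0, and let J ⊆ {1,…,d} be a set of p distinct indices. Let S be the LIME random subset of {1,…,d} with z_j = 1{j ∉ S} and π = ψ_ν(|S|/d). Then E[π · Π_{j∈J} z_j] = α_p(d,ν), and for every k ∈ {1,…,d} with k ∉ J, E[π · z_k · Π_{j∈J} z_j] = α_{p+1}(d,ν). -/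
noncomputable section

lemma count_lemma (d : ℕ) (J : Finset (Fin d)) (s : ℕ) :
    ∑ S ∈ Finset.univ.filter (fun S : Finset (Fin d) => S.card = s),
      (∏ j ∈ J, (if j ∉ S then (1 : ℝ) else 0)) = ((d - J.card).choose s : ℝ) := by
  have hsub : Finset.powersetCard s Jᶜ ⊆
      Finset.univ.filter (fun S : Finset (Fin d) => S.card = s) := by
    intro S hS
    rw [Finset.mem_powersetCard] at hS
    simp [hS.2]
  have hzero : ∀ S ∈ Finset.univ.filter (fun S : Finset (Fin d) => S.card = s),
      S ∉ Finset.powersetCard s Jᶜ → (∏ j ∈ J, (if j ∉ S then (1 : ℝ) else 0)) = 0 := by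
    intro S hS hS2
    rw [Finset.mem_filter] at hS
    rw [Finset.mem_powersetCard] at hS2
    push_neg at hS2
    have : ¬ S ⊆ Jᶜ := fun h => hS2 h hS.2
    rw [Finset.subset_iff] at this
    push_neg at this
    obtain ⟨j, hjS, hjJ⟩ := this
    rw [Finset.mem_compl, not_not] at hjJ
    exact Finset.prod_eq_zero hjJ (by simp [hjS])
  rw [← Finset.sum_subset hsub hzero]
  have hone : ∀ S ∈ Finset.powersetCard s Jᶜ,
      (∏ j ∈ J, (if j ∉ S then (1 : ℝ) else 0)) = 1 := by
    intro S hS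
    rw [Finset.mem_powersetCard] at hS
    apply Finset.prod_eq_one
    intro j hj
    have : j ∉ S := fun hjS => (Finset.mem_compl.mp (hS.1 hjS)) hj
    simp [this]
  rw [Finset.sum_congr rfl hone, Finset.sum_const, Finset.card_powersetCard,
    Finset.card_compl, Fintype.card_fin]
  simp

lemma ratio_step (m s : ℕ) (hm : 1 ≤ m) :
    (((m - 1).choose s : ℝ)) * m = (m.choose s : ℝ) * ((m : ℝ) - s) := by
  rcases le_or_gt s m with h | h
  · have key : (m - 1).choose s * m = m.choose s * (m - s) := by
      obtain ⟨n, rfl⟩ : ∃ n, m = n + 1 := ⟨m - 1, by omega⟩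
      simpa using Nat.choose_mul_succ_eq n s
    have := congrArg (fun n : ℕ => (n : ℝ)) key
    push_cast [Nat.cast_sub h] at this
    linarith
  · rw [Nat.choose_eq_zero_of_lt h, Nat.choose_eq_zero_of_lt (by omega)]
    simp

lemma ratio_lemma (d : ℕ) : ∀ p s : ℕ, p ≤ d → s ≤ d →
    (((d - p).choose s : ℝ)) =
      (∏ k ∈ Finset.range p, (((d : ℝ) - (s : ℝ) - (k : ℝ)) / ((d : ℝ) - (k : ℝ)))) *
        (d.choose s : ℝ) := by
  intro p
  induction p with
  | zero => intro s _ _; simp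
  | succ p ih =>
    intro s hp hs
    rw [Finset.prod_range_succ]
    have hih := ih s (by omega) hs
    have hm : 1 ≤ d - p := by omega
    have hstep := ratio_step (d - p) s hm
    have hdp : ((d - p : ℕ) : ℝ) = (d : ℝ) - p := by
      push_cast [Nat.cast_sub (by omega : p ≤ d)]; ring
    have hdp1 : d - (p + 1) = (d - p) - 1 := by omega
    have hne : ((d : ℝ) - p) ≠ 0 := by
      rw [← hdp]; exact (Nat.cast_pos.mpr hm).ne'
    rw [hdp] at hstep
    have hdiv : (((d - p - 1).choose s : ℝ)) =
        ((d - p).choose s : ℝ) * ((d : ℝ) - p - (s : ℝ)) / ((d : ℝ) - p) := by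
      field_simp
      linarith [hstep]
    rw [hdp1, hdiv, hih]
    ring

lemma main_lemma (d : ℕ) (ν : ℝ) (J : Finset (Fin d)) :
    limeExp d (fun S => psi ν ((S.card : ℝ) / (d : ℝ)) *
        ∏ j ∈ J, (if j ∉ S then (1 : ℝ) else 0)) = alpha d ν J.card := by
  unfold limeExp alpha
  congr 1
  apply Finset.sum_congr rfl
  intro s hs
  rw [Finset.mem_Icc] at hs
  have hJ : J.card ≤ d := by
    simpa using Finset.card_le_card (Finset.subset_univ J)
  have h1 : ∑ S ∈ Finset.univ.filter (fun S : Finset (Fin d) => S.card = s),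
      (psi ν ((S.card : ℝ) / (d : ℝ)) * ∏ j ∈ J, (if j ∉ S then (1 : ℝ) else 0)) =
      psi ν ((s : ℝ) / (d : ℝ)) * ((d - J.card).choose s : ℝ) := by
    rw [← count_lemma d J s, Finset.mul_sum]
    apply Finset.sum_congr rfl
    intro S hS
    rw [Finset.mem_filter] at hS
    rw [hS.2]
  rw [h1, ratio_lemma d J.card s hJ hs.2]
  have hc : (d.choose s : ℝ) ≠ 0 := (Nat.cast_pos.mpr (Nat.choose_pos hs.2)).ne'
  have hprod : (∏ k ∈ Finset.range J.card, ((d : ℝ) - (k : ℝ))) ≠ 0 := by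
    apply Finset.prod_ne_zero_iff.mpr
    intro k hk
    rw [Finset.mem_range] at hk
    have : (k : ℝ) < d := by exact_mod_cast lt_of_lt_of_le hk hJ
    linarith
  field_simp

/-- for a set J of p distinct indices, E[π ∏_{j∈J} z_j] = α_p and,
for k ∉ J, E[π z_k ∏_{j∈J} z_j] = α_{p+1}. -/
theorem lime_indicator_moments (d : ℕ) (hd : 1 ≤ d) (ν : ℝ) (hν : 0 < ν)
    (J : Finset (Fin d)) :
    limeExp d (fun S => psi ν ((S.card : ℝ) / (d : ℝ)) *
        ∏ j ∈ J, (if j ∉ S then (1 : ℝ) else 0)) = alpha d ν J.card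
      ∧ ∀ k : Fin d, k ∉ J →
        limeExp d (fun S => psi ν ((S.card : ℝ) / (d : ℝ)) *
            (if k ∉ S then (1 : ℝ) else 0) *
            ∏ j ∈ J, (if j ∉ S then (1 : ℝ) else 0)) = alpha d ν (J.card + 1) := by
  constructor
  · exact main_lemma d ν J
  · intro k hk
    have := main_lemma d ν (insert k J)
    rw [Finset.card_insert_of_notMem hk] at this
    rw [← this]
    congr 1
    ext S
    rw [Finset.prod_insert hk]
    ring
end
end

section
/- Let d ≥ 2, let u_1,…,u_d be positive reals, and let S be the LIME random subset of {1,…,d}. Fix 1 ≤ j ≤ d. Then E[(φ_S)_j] = E[z_j (φ_S)_j] = ((d−1)/(2d)) · (u_j/√(Σ_{k=1}^d u_k²)) · E[(1 − H_S)^{−1/2} | j ∉ S], where the conditional expectation given the event {j ∉ S} is E[1{j∉S} (1−H_S)^{−1/2}] / P(j ∉ S). -/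
noncomputable section

/-- Normalized TF-IDF of the perturbed document obtained by deleting the words
indexed by `S`: `(φ_S)_j = 1{j ∉ S} · u_j / √(∑_{k ∉ S} u_k²)`, and `φ_S = 0`
when all words are deleted. -/
def phiS {d : ℕ} (u : Fin d → ℝ) (S : Finset (Fin d)) : Fin d → ℝ :=
  if S = Finset.univ then 0 else
    fun j => (if j ∉ S then (1 : ℝ) else 0) * u j / Real.sqrt (∑ k ∈ Sᶜ, (u k) ^ 2)

/-- `H_S = ∑_{k∈S} ω_k` with `ω_k = u_k²/∑_ℓ u_ℓ²`. -/
def HS {d : ℕ} (u : Fin d → ℝ) (S : Finset (Fin d)) : ℝ :=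
  ∑ k ∈ S, (u k) ^ 2 / (∑ l, (u l) ^ 2)

lemma limeExp_const_mul (d : ℕ) (c : ℝ) (g : Finset (Fin d) → ℝ) :
    limeExp d (fun S => c * g S) = c * limeExp d g := by
  unfold limeExp
  rw [← mul_assoc, mul_comm c, mul_assoc, Finset.mul_sum _ _ c]
  congr 1
  refine Finset.sum_congr rfl fun s _ => ?_
  rw [← Finset.mul_sum _ _ c]
  ring

lemma phi_eq {d : ℕ} (u : Fin d → ℝ) (hu : ∀ k, 0 < u k) (j : Fin d) (S : Finset (Fin d)) :
    phiS u S j = (u j / Real.sqrt (∑ k, (u k) ^ 2)) *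
      (if j ∉ S then (Real.sqrt (1 - HS u S))⁻¹ else 0) := by
  unfold phiS
  by_cases hS : S = Finset.univ
  · subst hS; simp
  · simp only [if_neg hS]
    by_cases hj : j ∈ S
    · simp [hj]
    · simp only [hj, not_false_iff, if_pos, one_mul, if_true]
      have hT : 0 < ∑ k, (u k) ^ 2 :=
        Finset.sum_pos (fun k _ => pow_pos (hu k) 2) ⟨j, Finset.mem_univ j⟩
      have hScne : Sᶜ.Nonempty := by
        rw [Finset.nonempty_iff_ne_empty]
        intro h
        exact hS (by simpa using congrArg (·ᶜ) h)
      have hA : 0 < ∑ k ∈ Sᶜ, (u k) ^ 2 :=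
        Finset.sum_pos (fun k _ => pow_pos (hu k) 2) hScne
      have hHS : 1 - HS u S = (∑ k ∈ Sᶜ, (u k) ^ 2) / (∑ k, (u k) ^ 2) := by
        unfold HS
        rw [← Finset.sum_div]
        have hsum : (∑ k ∈ S, (u k) ^ 2) + (∑ k ∈ Sᶜ, (u k) ^ 2) = ∑ k, (u k) ^ 2 :=
          Finset.sum_add_sum_compl S _
        field_simp
        linarith
      rw [hHS, Real.sqrt_div (le_of_lt hA)]
      rw [inv_div]
      have h1 : Real.sqrt (∑ k, (u k) ^ 2) ≠ 0 := ne_of_gt (Real.sqrt_pos.mpr hT)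
      have h2 : Real.sqrt (∑ k ∈ Sᶜ, (u k) ^ 2) ≠ 0 := ne_of_gt (Real.sqrt_pos.mpr hA)
      field_simp

lemma choose_id (d s : ℕ) (hd : 1 ≤ d) :
    d * (d - 1).choose s = (d - s) * d.choose s := by
  rcases Nat.lt_or_ge s d with h | h
  · have h1 : d.choose (s + 1) * (s + 1) = d.choose s * (d - s) := Nat.choose_succ_right_eq d s
    have h2 : (d - 1).succ * (d - 1).choose s = (d - 1).succ.choose (s + 1) * (s + 1) :=
      Nat.add_one_mul_choose_eq (d - 1) s
    have h3 : (d - 1).succ = d := by omega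
    rw [h3, h1] at h2
    exact h2.trans (Nat.mul_comm _ _)
  · rcases Nat.eq_or_lt_of_le h with rfl | h
    · simp [Nat.choose_eq_zero_of_lt (by omega : d - 1 < d)]
    · simp [Nat.choose_eq_zero_of_lt h, Nat.choose_eq_zero_of_lt (by omega : d - 1 < s)]

lemma gauss_sum (d : ℕ) : ∑ s ∈ Finset.Icc 1 d, ((d : ℝ) - s) = d * ((d : ℝ) - 1) / 2 := by
  induction d with
  | zero => simp
  | succ n ih =>
    rw [Finset.sum_Icc_succ_top (by omega : 1 ≤ n + 1)]
    have h : ∀ s ∈ Finset.Icc 1 n, ((n + 1 : ℕ) : ℝ) - (s : ℝ) = ((n : ℝ) - s) + 1 := by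
      intro s _; push_cast; ring
    rw [Finset.sum_congr rfl h, Finset.sum_add_distrib, ih, Finset.sum_const, Nat.card_Icc]
    push_cast
    simp only [nsmul_eq_mul, mul_one]
    ring

lemma limeExp_indicator (d : ℕ) (hd : 2 ≤ d) (j : Fin d) :
    limeExp d (fun S => if j ∉ S then (1 : ℝ) else 0) = ((d : ℝ) - 1) / (2 * d) := by
  unfold limeExp
  have hstep : ∀ s ∈ Finset.Icc 1 d, ((d.choose s : ℝ))⁻¹ *
      ∑ S ∈ Finset.univ.filter (fun S : Finset (Fin d) => S.card = s),
        (if j ∉ S then (1 : ℝ) else 0) = ((d : ℝ) - s) / d := by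
    intro s hs
    rw [Finset.mem_Icc] at hs
    have hcount : ∑ S ∈ Finset.univ.filter (fun S : Finset (Fin d) => S.card = s),
        (if j ∉ S then (1 : ℝ) else 0) = (((d - 1).choose s : ℕ) : ℝ) := by
      rw [Finset.sum_boole]
      congr 1
      rw [Finset.filter_filter]
      have heq : Finset.filter (fun S : Finset (Fin d) => S.card = s ∧ j ∉ S) Finset.univ
          = Finset.powersetCard s ({j}ᶜ : Finset (Fin d)) := by
        ext S
        simp only [Finset.mem_filter, Finset.mem_univ, true_and, Finset.mem_powersetCard]
        constructor
        · rintro ⟨hc, hj⟩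
          refine ⟨fun x hx => Finset.mem_compl.2 ?_, hc⟩
          simp only [Finset.mem_singleton]
          rintro rfl; exact hj hx
        · rintro ⟨hsub, hc⟩
          refine ⟨hc, fun hj => ?_⟩
          have := hsub hj
          simp at this
      rw [heq, Finset.card_powersetCard]
      simp [Finset.card_compl]
    rw [hcount]
    have hC : (0 : ℝ) < (d.choose s : ℝ) := by exact_mod_cast Nat.choose_pos hs.2
    have key : (d : ℝ) * (((d - 1).choose s : ℕ) : ℝ) = ((d : ℝ) - s) * (d.choose s : ℝ) := by
      have h1 := choose_id d s (by omega)
      have h2 : ((d - s : ℕ) : ℝ) = (d : ℝ) - s := by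
        rw [Nat.cast_sub hs.2]
      calc (d : ℝ) * (((d - 1).choose s : ℕ) : ℝ)
          = ((d * (d - 1).choose s : ℕ) : ℝ) := by push_cast; ring
        _ = (((d - s) * d.choose s : ℕ) : ℝ) := by rw [h1]
        _ = ((d : ℝ) - s) * (d.choose s : ℝ) := by push_cast [Nat.cast_sub hs.2]; ring
    have hd0 : ((d : ℝ)) ≠ 0 := by positivity
    field_simp
    linarith [key]
  rw [Finset.sum_congr rfl hstep, ← Finset.sum_div, gauss_sum]
  have hd0 : ((d : ℝ)) ≠ 0 := by
    have : (0:ℝ) < d := by exact_mod_cast (by omega : 0 < d)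
    exact ne_of_gt this
  field_simp

/-- E[(φ_S)_j] = E[z_j (φ_S)_j]
= ((d−1)/(2d)) · (u_j/‖u‖) · E[(1−H_S)^{−1/2} | j ∉ S]. -/
theorem expected_tfidf (d : ℕ) (hd : 2 ≤ d) (u : Fin d → ℝ) (hu : ∀ k, 0 < u k)
    (j : Fin d) :
    limeExp d (fun S => phiS u S j)
        = (((d : ℝ) - 1) / (2 * (d : ℝ))) * (u j / Real.sqrt (∑ k, (u k) ^ 2)) *
          (limeExp d (fun S => if j ∉ S then (Real.sqrt (1 - HS u S))⁻¹ else 0) /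
            limeExp d (fun S => if j ∉ S then (1 : ℝ) else 0))
      ∧ limeExp d (fun S => (if j ∉ S then (1 : ℝ) else 0) * phiS u S j)
        = (((d : ℝ) - 1) / (2 * (d : ℝ))) * (u j / Real.sqrt (∑ k, (u k) ^ 2)) *
          (limeExp d (fun S => if j ∉ S then (Real.sqrt (1 - HS u S))⁻¹ else 0) /
            limeExp d (fun S => if j ∉ S then (1 : ℝ) else 0)) := by
  set c := u j / Real.sqrt (∑ k, (u k) ^ 2) with hc
  have hrw : (fun S : Finset (Fin d) => phiS u S j)
      = fun S => c * (if j ∉ S then (Real.sqrt (1 - HS u S))⁻¹ else 0) :=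
    funext (phi_eq u hu j)
  have hrw2 : (fun S : Finset (Fin d) => (if j ∉ S then (1 : ℝ) else 0) * phiS u S j)
      = fun S => c * (if j ∉ S then (Real.sqrt (1 - HS u S))⁻¹ else 0) := by
    funext S
    rw [phi_eq u hu j S]
    by_cases h : j ∈ S <;> simp [h, hc]
  have hD : ((d : ℝ) - 1) / (2 * d) ≠ 0 := by
    have h2 : (2 : ℝ) ≤ (d : ℝ) := by exact_mod_cast hd
    exact ne_of_gt (div_pos (by linarith) (by linarith))
  have hd0 : ((d : ℝ)) ≠ 0 := by
    have : (2 : ℝ) ≤ (d : ℝ) := by exact_mod_cast hd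
    linarith
  have hd1 : ((d : ℝ)) - 1 ≠ 0 := by
    have : (2 : ℝ) ≤ (d : ℝ) := by exact_mod_cast hd
    linarith
  rw [hrw, hrw2, limeExp_const_mul, limeExp_indicator d hd j]
  constructor <;>
  · generalize limeExp d (fun S => if j ∉ S then (Real.sqrt (1 - HS u S))⁻¹ else 0) = N
    field_simp
end
end

section
/- Let d ≥ 3, let u_1,…,u_d be positive reals, and let S be the LIME random subset of {1,…,d}. Fix 1 ≤ j, k ≤ d with j ≠ k. Then E[z_k (φ_S)_j] = ((d−2)/(3d)) · (u_j/√(Σ_{ℓ=1}^d u_ℓ²)) · E[(1 − H_S)^{−1/2} | j ∉ S and k ∉ S], where the conditional expectation given the event {j ∉ S, k ∉ S} is E[1{j∉S, k∉S} (1−H_S)^{−1/2}] / P(j ∉ S, k ∉ S). -/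
noncomputable section

lemma sum_sq_lin (n : ℕ) : ∑ t ∈ Finset.range n, ((t:ℝ) * ((t:ℝ) - 1))
    = (n:ℝ) * ((n:ℝ) - 1) * ((n:ℝ) - 2) / 3 := by
  induction n with
  | zero => simp
  | succ n ih => rw [Finset.sum_range_succ, ih]; push_cast; ring

lemma hnat (d s : ℕ) (hd : 3 ≤ d) :
    d * (d - 1) * ((d - 2).choose s) = d.choose s * ((d - s) * (d - 1 - s)) := by
  obtain ⟨m, rfl⟩ : ∃ m, d = m + 2 := ⟨d - 2, by omega⟩
  have h1 := Nat.choose_mul_succ_eq (m + 1) s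
  have h2 := Nat.choose_mul_succ_eq m s
  simp only [show m + 2 - 1 = m + 1 from rfl, show m + 2 - 2 = m from rfl]
  have e1 : (m + 2).choose s * ((m + 2 - s) * (m + 1 - s))
      = ((m + 2).choose s * (m + 2 - s)) * (m + 1 - s) := by ring
  rw [e1, ← h1]
  have e2 : (m + 1).choose s * (m + 1 + 1) * (m + 1 - s)
      = ((m + 1).choose s * (m + 1 - s)) * (m + 2) := by ring
  rw [e2, ← h2]
  ring

lemma term_eq (d s : ℕ) (hd : 3 ≤ d) (h2 : s ≤ d) :
    ((d.choose s : ℝ))⁻¹ * ((d - 2).choose s : ℝ)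
      = (((d - s : ℕ) : ℝ) * (((d - s : ℕ) : ℝ) - 1)) / ((d : ℝ) * ((d : ℝ) - 1)) := by
  have hc : (0:ℝ) < (d.choose s : ℝ) := by exact_mod_cast Nat.choose_pos h2
  have hdr : (1:ℝ) < (d:ℝ) := by exact_mod_cast (show 1 < d by omega)
  by_cases hs : s = d
  · subst hs
    rw [Nat.choose_eq_zero_of_lt (show s - 2 < s by omega), Nat.sub_self]
    simp
  · have hcast : ((d - 1 - s : ℕ) : ℝ) = ((d - s : ℕ) : ℝ) - 1 := by
      have e : d - 1 - s = (d - s) - 1 := by omega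
      rw [e, Nat.cast_sub (by omega)]; simp
    have h1d : ((d - 1 : ℕ) : ℝ) = (d:ℝ) - 1 := by
      rw [Nat.cast_sub (by omega)]; simp
    have h1 : ((d * (d-1) * ((d-2).choose s) : ℕ) : ℝ)
        = ((d.choose s * ((d - s) * (d - 1 - s)) : ℕ) : ℝ) := by
      exact_mod_cast congrArg (fun n : ℕ => (n:ℝ)) (hnat d s hd)
    push_cast at h1
    rw [hcast, h1d] at h1
    rw [inv_mul_eq_div, div_eq_div_iff hc.ne' (by nlinarith : (d:ℝ)*((d:ℝ)-1) ≠ 0)]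
    linear_combination h1

lemma count_eq (d s : ℕ) (j k : Fin d) (hjk : j ≠ k) :
    (∑ S ∈ Finset.univ.filter (fun S : Finset (Fin d) => S.card = s),
      (if j ∉ S ∧ k ∉ S then (1:ℝ) else 0)) = ((d - 2).choose s : ℝ) := by
  rw [Finset.sum_boole, Finset.filter_filter]
  have hset : (Finset.univ.filter (fun S : Finset (Fin d) => S.card = s ∧ (j ∉ S ∧ k ∉ S)))
      = Finset.powersetCard s ({j, k} : Finset (Fin d))ᶜ := by
    ext S
    simp only [Finset.mem_filter, Finset.mem_univ, true_and, Finset.mem_powersetCard]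
    constructor
    · rintro ⟨hc, hj, hk⟩
      refine ⟨fun x hx => ?_, hc⟩
      simp only [Finset.mem_compl, Finset.mem_insert, Finset.mem_singleton]
      push_neg
      exact ⟨fun h => hj (h ▸ hx), fun h => hk (h ▸ hx)⟩
    · rintro ⟨hsub, hc⟩
      refine ⟨hc, fun hjS => ?_, fun hkS => ?_⟩
      · have := hsub hjS; simp at this
      · have := hsub hkS; simp at this
  rw [hset, Finset.card_powersetCard]
  congr 2
  rw [Finset.card_compl, Finset.card_pair hjk]
  simp

lemma B_eq (d : ℕ) (hd : 3 ≤ d) (j k : Fin d) (hjk : j ≠ k) :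
    limeExp d (fun S => if j ∉ S ∧ k ∉ S then (1:ℝ) else 0)
      = ((d:ℝ) - 2) / (3 * (d:ℝ)) := by
  have hd0 : (0:ℝ) < (d:ℝ) := by exact_mod_cast (show 0 < d by omega)
  have hd1 : (1:ℝ) < (d:ℝ) := by exact_mod_cast (show 1 < d by omega)
  unfold limeExp
  have h1 : ∀ s ∈ Finset.Icc 1 d,
      ((d.choose s : ℝ))⁻¹ * (∑ S ∈ Finset.univ.filter (fun S : Finset (Fin d) => S.card = s),
        (if j ∉ S ∧ k ∉ S then (1:ℝ) else 0))
      = (((d - s : ℕ) : ℝ) * (((d - s : ℕ) : ℝ) - 1)) / ((d : ℝ) * ((d : ℝ) - 1)) := by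
    intro s hs
    rw [Finset.mem_Icc] at hs
    rw [count_eq d s j k hjk, term_eq d s hd hs.2]
  rw [Finset.sum_congr rfl h1]
  have h2 : (∑ s ∈ Finset.Icc 1 d,
      (((d - s : ℕ) : ℝ) * (((d - s : ℕ) : ℝ) - 1)) / ((d : ℝ) * ((d : ℝ) - 1)))
      = (∑ t ∈ Finset.range d, ((t:ℝ) * ((t:ℝ) - 1))) / ((d : ℝ) * ((d : ℝ) - 1)) := by
    rw [Finset.sum_div]
    exact Finset.sum_nbij' (fun s => d - s) (fun t => d - t)
      (fun a ha => by simp only [Finset.mem_Icc] at ha; simp only [Finset.mem_range]; omega)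
      (fun a ha => by simp only [Finset.mem_range] at ha; simp only [Finset.mem_Icc]; omega)
      (fun a ha => by simp only [Finset.mem_Icc] at ha; omega)
      (fun a ha => by simp only [Finset.mem_range] at ha; omega)
      (fun a ha => rfl)
  rw [h2, sum_sq_lin d]
  have hne1 : (d:ℝ) ≠ 0 := hd0.ne'
  have hne2 : (d:ℝ) - 1 ≠ 0 := by linarith
  field_simp

lemma pointwise {d : ℕ} (u : Fin d → ℝ) (hu : ∀ k, 0 < u k) (j k : Fin d)
    (S : Finset (Fin d)) :
    (if k ∉ S then (1 : ℝ) else 0) * phiS u S j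
      = (u j / Real.sqrt (∑ l, (u l) ^ 2)) *
        (if j ∉ S ∧ k ∉ S then (Real.sqrt (1 - HS u S))⁻¹ else 0) := by
  have hT : (0:ℝ) < ∑ l, (u l) ^ 2 :=
    Finset.sum_pos' (fun i _ => sq_nonneg _) ⟨k, Finset.mem_univ k, pow_pos (hu k) 2⟩
  by_cases hk : k ∈ S
  · simp [hk]
  · by_cases hj : j ∈ S
    · have hne : S ≠ Finset.univ := fun h => hk (h ▸ Finset.mem_univ k)
      simp [phiS, hne, hj, hk]
    · -- main case: j ∉ S, k ∉ S
      have hne : S ≠ Finset.univ := fun h => hk (h ▸ Finset.mem_univ k)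
      have hkc : k ∈ Sᶜ := Finset.mem_compl.mpr hk
      have hSc : (0:ℝ) < ∑ l ∈ Sᶜ, (u l) ^ 2 :=
        Finset.sum_pos' (fun i _ => sq_nonneg _) ⟨k, hkc, pow_pos (hu k) 2⟩
      have hsplit : (∑ l ∈ S, (u l) ^ 2) + (∑ l ∈ Sᶜ, (u l) ^ 2) = ∑ l, (u l) ^ 2 :=
        Finset.sum_add_sum_compl S _
      have hHS : 1 - HS u S = (∑ l ∈ Sᶜ, (u l) ^ 2) / (∑ l, (u l) ^ 2) := by
        unfold HS
        rw [← Finset.sum_div, eq_div_iff hT.ne', sub_mul, div_mul_cancel₀ _ hT.ne', one_mul]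
        linarith
      have hsqrt : Real.sqrt (1 - HS u S)
          = Real.sqrt (∑ l ∈ Sᶜ, (u l) ^ 2) / Real.sqrt (∑ l, (u l) ^ 2) := by
        rw [hHS, Real.sqrt_div hSc.le]
      have hsT : (0:ℝ) < Real.sqrt (∑ l, (u l) ^ 2) := Real.sqrt_pos.mpr hT
      have hsS : (0:ℝ) < Real.sqrt (∑ l ∈ Sᶜ, (u l) ^ 2) := Real.sqrt_pos.mpr hSc
      rw [if_pos hk, if_pos ⟨hj, hk⟩, hsqrt]
      simp only [phiS, if_neg hne, if_pos hj]
      field_simp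

/-- for j ≠ k,
E[z_k (φ_S)_j] = ((d−2)/(3d)) · (u_j/‖u‖) · E[(1−H_S)^{−1/2} | j ∉ S, k ∉ S]. -/
theorem expected_tfidf_two_indices (d : ℕ) (hd : 3 ≤ d) (u : Fin d → ℝ)
    (hu : ∀ k, 0 < u k) (j k : Fin d) (hjk : j ≠ k) :
    limeExp d (fun S => (if k ∉ S then (1 : ℝ) else 0) * phiS u S j)
      = (((d : ℝ) - 2) / (3 * (d : ℝ))) * (u j / Real.sqrt (∑ l, (u l) ^ 2)) *
        (limeExp d (fun S => if j ∉ S ∧ k ∉ S then (Real.sqrt (1 - HS u S))⁻¹ else 0) /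
          limeExp d (fun S => if j ∉ S ∧ k ∉ S then (1 : ℝ) else 0)) := by
  have hT : (0:ℝ) < ∑ l, (u l) ^ 2 :=
    Finset.sum_pos' (fun i _ => sq_nonneg _) ⟨k, Finset.mem_univ k, pow_pos (hu k) 2⟩
  have hsT : (0:ℝ) < Real.sqrt (∑ l, (u l) ^ 2) := Real.sqrt_pos.mpr hT
  have hfun : (fun S : Finset (Fin d) => (if k ∉ S then (1 : ℝ) else 0) * phiS u S j)
      = (fun S => (u j / Real.sqrt (∑ l, (u l) ^ 2)) *
        (if j ∉ S ∧ k ∉ S then (Real.sqrt (1 - HS u S))⁻¹ else 0)) :=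
    funext (pointwise u hu j k)
  rw [hfun, limeExp_const_mul, B_eq d hd j k hjk]
  have h3 : (3:ℝ) ≤ (d:ℝ) := by exact_mod_cast hd
  have h1 : ((d:ℝ) - 2) ≠ 0 := by linarith
  have h2 : (3 * (d:ℝ)) ≠ 0 := by linarith
  field_simp
end
end
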